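/- arXiv:1803.02461 — 13 statements merged into one kernel-verified Lean document; each statement's English description precedes it below -/
import Mathlib

section
/- Suppose g is ρ-weakly convex (every weak subgradient satisfies the defining inequality below), μ-sharp on 𝒳, and 𝒳* is nonempty. If a point x ∈ 𝒳 is stationary for the problem min_{𝒳} g in the sense that 0 is a weak subgradient of g + δ_𝒳 at x, i.e. g(y) ≥ g(x) − (ρ/2)‖y − x‖² for all y ∈ 𝒳, and x ∉ 𝒳*, then dist(x, 𝒳*) ≥ 2μ/ρ. Equivalently, the problem min_{𝒳} g has no stationary points x with 0 < dist(x, 𝒳*) < 2μ/ρ. -/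
open scoped InnerProductSpace

/-- **No stationary points in the tube.**
If `g` is `ρ`-weakly convex and `μ`-sharp on `X` with nonempty solution set `Xstar`,
then any point `x ∈ X` that is stationary for `min_X g` (i.e. `0` is a weak subgradient
of `g + δ_X` at `x`) and does not lie in `Xstar` satisfies `dist(x, Xstar) ≥ 2μ/ρ`. -/
theorem no_stationary_points_in_tube
    {d : ℕ} (hd : 1 ≤ d)
    (g : EuclideanSpace ℝ (Fin d) → ℝ) (μ ρ : ℝ) (hμ : 0 < μ) (hρ : 0 < ρ)
    (X Xstar : Set (EuclideanSpace ℝ (Fin d)))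
    (hXne : X.Nonempty) (hXcl : IsClosed X) (hXcv : Convex ℝ X)
    (hXstar : Xstar = {x | x ∈ X ∧ ∀ y ∈ X, g x ≤ g y})
    (hXstarNe : Xstar.Nonempty)
    -- `g` is `ρ`-weakly convex
    (hweak : ConvexOn ℝ Set.univ (fun x => g x + ρ / 2 * ‖x‖ ^ 2))
    -- `gstar` is the minimal value of `g` over `X`
    (gstar : ℝ) (hgstar : ∀ z ∈ Xstar, g z = gstar)
    -- sharpness
    (hsharp : ∀ x ∈ X, μ * Metric.infDist x Xstar ≤ g x - gstar)
    -- `x` is stationary: `0` is a weak subgradient of `g + δ_X` at `x`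
    (x : EuclideanSpace ℝ (Fin d)) (hxX : x ∈ X)
    (hstat : ∀ y ∈ X, g x - ρ / 2 * ‖y - x‖ ^ 2 ≤ g y)
    (hxnot : x ∉ Xstar) :
    2 * μ / ρ ≤ Metric.infDist x Xstar := by
  set D := Metric.infDist x Xstar with hD
  have hD0 : 0 ≤ D := Metric.infDist_nonneg
  have hc0 : 0 ≤ g x - gstar := le_trans (by positivity) (hsharp x hxX)
  -- key pointwise bound: for z ∈ Xstar, g x - gstar ≤ ρ/2 * dist x z ^ 2
  have hineq : ∀ z ∈ Xstar, g x - gstar ≤ ρ / 2 * dist x z ^ 2 := by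
    intro z hz
    have hzX : z ∈ X := by rw [hXstar] at hz; exact hz.1
    have h1 := hstat z hzX
    have h2 : g z = gstar := hgstar z hz
    have h3 : dist x z = ‖z - x‖ := by
      rw [dist_eq_norm, norm_sub_rev]
    rw [h3]; linarith
  -- hence sqrt(2(g x - gstar)/ρ) ≤ D
  have hsqrt : Real.sqrt (2 * (g x - gstar) / ρ) ≤ D := by
    refine le_of_not_gt fun hlt => ?_
    rw [hD, Metric.infDist_lt_iff hXstarNe] at hlt
    obtain ⟨z, hz, hdist⟩ := hlt
    refine absurd hdist (not_lt.2 ?_)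
    have h1 := hineq z hz
    have hdz : 0 ≤ dist x z := dist_nonneg
    have h2 : 2 * (g x - gstar) / ρ ≤ dist x z ^ 2 := by
      rw [div_le_iff₀ hρ] at *
      nlinarith
    calc Real.sqrt (2 * (g x - gstar) / ρ) ≤ Real.sqrt (dist x z ^ 2) :=
          Real.sqrt_le_sqrt h2
      _ = dist x z := Real.sqrt_sq hdz
  have hsq : 2 * (g x - gstar) / ρ ≤ D ^ 2 := by
    have := Real.sq_sqrt (by positivity : (0:ℝ) ≤ 2 * (g x - gstar) / ρ)
    nlinarith [Real.sqrt_nonneg (2 * (g x - gstar) / ρ)]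
  have hkey : μ * D ≤ ρ / 2 * D ^ 2 := by
    have h1 := hsharp x hxX
    rw [div_le_iff₀ hρ] at hsq
    nlinarith
  -- D > 0: otherwise x ∈ Xstar
  have hDpos : 0 < D := by
    rcases lt_or_eq_of_le hD0 with h | h
    · exact h
    · exfalso
      have hc : g x - gstar ≤ 0 := by
        have := hsq; rw [← h] at this
        have h2 : 2 * (g x - gstar) / ρ ≤ 0 := by nlinarith
        rw [div_le_iff₀ hρ] at h2; nlinarith
      have hx : x ∈ Xstar := by
        rw [hXstar]
        refine ⟨hxX, fun y hy => ?_⟩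
        obtain ⟨z, hz⟩ := hXstarNe
        have hzX : z ∈ X := by rw [hXstar] at hz; exact hz.1
        have hzy : g z ≤ g y := by rw [hXstar] at hz; exact hz.2 y hy
        have := hgstar z hz
        linarith
      exact hxnot hx
  rw [div_le_iff₀ hρ]
  nlinarith
end

section
/- (Linear convergence of the Polyak subgradient method.) Suppose g is μ-sharp on 𝒳 with 𝒳* nonempty, fix γ ∈ (0,1) and L with 0 < μ ≤ L, and suppose every weak subgradient of g at every point of the tube 𝒯₁ has norm at most L. Let x : ℕ → ℝ^d and ζ : ℕ → ℝ^d be sequences such that x₀ ∈ 𝒯_γ, for every k the vector ζ_k is a weak subgradient of g at x_k, and x_{k+1} = proj_𝒳( x_k − ((g(x_k) − g*)/‖ζ_k‖²)·ζ_k ), with the convention that x_{k+1} = x_k when ζ_k = 0. Then for every k ≥ 0, dist²(x_{k+1}, 𝒳*) ≤ (1 − (1 − γ)(μ/L)²)·dist²(x_k, 𝒳*); in particular every iterate x_k lies in 𝒯_γ and the iterates converge Q-linearly to 𝒳*. -/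
open scoped InnerProductSpace

/-- Auxiliary: if `a ≤ f ε` for all `ε > 0` and `f` is continuous, then `a ≤ f 0`. -/
lemma aux_le_of_forall_pos_le {a : ℝ} {f : ℝ → ℝ} (hf : Continuous f)
    (h : ∀ ε > 0, a ≤ f ε) : a ≤ f 0 := by
  have h1 : Filter.Tendsto f (nhdsWithin 0 (Set.Ioi 0)) (nhds (f 0)) :=
    (hf.tendsto 0).mono_left nhdsWithin_le_nhds
  exact ge_of_tendsto h1 (Filter.eventually_of_mem self_mem_nhdsWithin fun ε hε => h ε hε)

set_option maxHeartbeats 1000000 in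
/-- **Linear convergence of the Polyak subgradient method.**
If `g` is `μ`-sharp on `X` with nonempty solution set `Xstar`, `γ ∈ (0,1)`,
`0 < μ ≤ L`, every weak subgradient at every point of the tube `𝒯₁` has norm at most `L`,
the initial point lies in the tube `𝒯_γ`, and the iterates follow the Polyak subgradient
update, then `dist²(x_{k+1}, Xstar) ≤ (1 - (1-γ)(μ/L)²)·dist²(x_k, Xstar)` for all `k`. -/
theorem polyak_subgradient_linear_rate
    {d : ℕ} (hd : 1 ≤ d)
    (g : EuclideanSpace ℝ (Fin d) → ℝ) (μ ρ L γ : ℝ)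
    (hμ : 0 < μ) (hρ : 0 < ρ) (hμL : μ ≤ L) (hγ : γ ∈ Set.Ioo (0 : ℝ) 1)
    (X Xstar : Set (EuclideanSpace ℝ (Fin d)))
    (hXne : X.Nonempty) (hXcl : IsClosed X) (hXcv : Convex ℝ X)
    (hXstar : Xstar = {x | x ∈ X ∧ ∀ y ∈ X, g x ≤ g y})
    (hXstarNe : Xstar.Nonempty)
    -- `gstar` is the minimal value of `g` over `X`
    (gstar : ℝ) (hgstar : ∀ z ∈ Xstar, g z = gstar)
    -- sharpness
    (hsharp : ∀ x ∈ X, μ * Metric.infDist x Xstar ≤ g x - gstar)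
    -- every weak subgradient at every point of the tube `𝒯₁` has norm at most `L`
    (hbound : ∀ x ∈ X, Metric.infDist x Xstar < μ / ρ →
      ∀ v : EuclideanSpace ℝ (Fin d),
        (∀ y, g x + ⟪v, y - x⟫_ℝ - ρ / 2 * ‖y - x‖ ^ 2 ≤ g y) → ‖v‖ ≤ L)
    -- the iterate and subgradient sequences
    (x ζ : ℕ → EuclideanSpace ℝ (Fin d))
    -- initialization in the tube `𝒯_γ`
    (hx0 : x 0 ∈ X) (hx0tube : Metric.infDist (x 0) Xstar < γ * μ / ρ)
    -- `ζ k` is a weak subgradient of `g` at `x k`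
    (hζ : ∀ k, ∀ y, g (x k) + ⟪ζ k, y - x k⟫_ℝ - ρ / 2 * ‖y - x k‖ ^ 2 ≤ g y)
    -- Polyak update: projection onto `X` of the Polyak subgradient step
    (hupdate : ∀ k, ζ k ≠ 0 →
      x (k + 1) ∈ X ∧
      ∀ y ∈ X, dist (x k - ((g (x k) - gstar) / ‖ζ k‖ ^ 2) • ζ k) (x (k + 1)) ≤
        dist (x k - ((g (x k) - gstar) / ‖ζ k‖ ^ 2) • ζ k) y)
    (hstop : ∀ k, ζ k = 0 → x (k + 1) = x k) :
    ∀ k : ℕ, Metric.infDist (x (k + 1)) Xstar ^ 2 ≤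
      (1 - (1 - γ) * (μ / L) ^ 2) * Metric.infDist (x k) Xstar ^ 2 := by
  obtain ⟨hγ0, hγ1⟩ := hγ
  have hL : 0 < L := lt_of_lt_of_le hμ hμL
  have hXsub : Xstar ⊆ X := by
    intro z hz; rw [hXstar] at hz; exact hz.1
  set c : ℝ := 1 - (1 - γ) * (μ / L) ^ 2 with hc
  have hμL1 : μ / L ≤ 1 := (div_le_one hL).2 hμL
  have hμL0 : 0 ≤ μ / L := le_of_lt (div_pos hμ hL)
  have ht0 : 0 ≤ (1 - γ) * (μ / L) ^ 2 := mul_nonneg (by linarith) (sq_nonneg _)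
  have ht1 : (1 - γ) * (μ / L) ^ 2 ≤ 1 := by
    have h1 : (μ / L) ^ 2 ≤ 1 := by nlinarith
    nlinarith
  have hc1 : c ≤ 1 := by rw [hc]; linarith
  have hc0 : 0 ≤ c := by rw [hc]; linarith
  -- key one-step lemma
  have key : ∀ k, x k ∈ X → Metric.infDist (x k) Xstar < γ * μ / ρ →
      x (k + 1) ∈ X ∧
        Metric.infDist (x (k + 1)) Xstar ^ 2 ≤ c * Metric.infDist (x k) Xstar ^ 2 := by
    intro k hxk hDk
    set D := Metric.infDist (x k) Xstar with hDdef
    have hD0 : 0 ≤ D := Metric.infDist_nonneg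
    have hμD : μ * D ≤ g (x k) - gstar := hsharp _ hxk
    have hΔ0 : 0 ≤ g (x k) - gstar := le_trans (mul_nonneg hμ.le hD0) hμD
    have hρD : ρ * D < γ * μ := by
      have h := (lt_div_iff₀ hρ).1 hDk
      nlinarith
    by_cases hz : ζ k = 0
    · -- stationary case : D = 0
      have hx1 : x (k + 1) = x k := hstop k hz
      have hle : ∀ ε > 0, g (x k) - gstar ≤ ρ / 2 * (D + ε) ^ 2 := by
        intro ε hε
        obtain ⟨z, hzX, hdz⟩ := (Metric.infDist_lt_iff hXstarNe).1
          (show D < D + ε by linarith)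
        have hsubg := hζ k z
        rw [hz, inner_zero_left] at hsubg
        have hgz := hgstar z hzX
        have hnorm : ‖z - x k‖ ≤ D + ε := by
          rw [← dist_eq_norm, dist_comm]; exact hdz.le
        have hnorm0 : (0:ℝ) ≤ ‖z - x k‖ := norm_nonneg _
        have hsq : ‖z - x k‖ ^ 2 ≤ (D + ε) ^ 2 := by nlinarith
        have := mul_le_mul_of_nonneg_left hsq (show (0:ℝ) ≤ ρ / 2 by linarith)
        linarith
      have hΔle : g (x k) - gstar ≤ ρ / 2 * (D + 0) ^ 2 :=
        aux_le_of_forall_pos_le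
          (continuous_const.mul ((continuous_const.add continuous_id).pow 2)) hle
      have hDzero : D = 0 := by
        apply le_antisymm _ hD0
        nlinarith [hΔle, hμD, hρD]
      refine ⟨hx1 ▸ hxk, ?_⟩
      rw [hx1, ← hDdef, hDzero]
      norm_num
    · -- subgradient step
      have hζpos : (0:ℝ) < ‖ζ k‖ := norm_pos_iff.2 hz
      have hS0 : (0:ℝ) < ‖ζ k‖ ^ 2 := by positivity
      have hζL : ‖ζ k‖ ≤ L := by
        refine hbound _ hxk ?_ (ζ k) (hζ k)
        have h1 : γ * μ ≤ μ := by nlinarith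
        exact lt_of_lt_of_le hDk ((div_le_div_iff_of_pos_right hρ).2 h1)
      have hSL : ‖ζ k‖ ^ 2 ≤ L ^ 2 := by nlinarith
      obtain ⟨hx1X, hproj⟩ := hupdate k hz
      set S := ‖ζ k‖ ^ 2 with hSdef
      set α := (g (x k) - gstar) / S with hαdef
      set p := x k - α • ζ k with hpdef
      have hα0 : 0 ≤ α := div_nonneg hΔ0 hS0.le
      have hαS : α * S = g (x k) - gstar := div_mul_cancel₀ _ (ne_of_gt hS0)
      -- the update is the metric projection of `p` onto `X`
      have hchar : ∀ w ∈ X, ⟪p - x (k + 1), w - x (k + 1)⟫_ℝ ≤ 0 := by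
        intro w hw
        have hC : (0:ℝ) ≤ ‖w - x (k + 1)‖ ^ 2 := sq_nonneg _
        have hkey : ∀ θ : ℝ, 0 < θ → θ ≤ 1 →
            2 * ⟪p - x (k + 1), w - x (k + 1)⟫_ℝ ≤ θ * ‖w - x (k + 1)‖ ^ 2 := by
          intro θ hθ0 hθ1
          have hmem : (1 - θ) • x (k + 1) + θ • w ∈ X :=
            hXcv hx1X hw (by linarith) hθ0.le (by ring)
          have hd := hproj _ hmem
          rw [dist_eq_norm, dist_eq_norm] at hd
          have hd2 := pow_le_pow_left₀ (norm_nonneg _) hd 2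
          have he : p - ((1 - θ) • x (k + 1) + θ • w)
              = (p - x (k + 1)) - θ • (w - x (k + 1)) := by
            rw [smul_sub, sub_smul, one_smul]; abel
          have hexp2 : ‖(p - x (k + 1)) - θ • (w - x (k + 1))‖ ^ 2
              = ‖p - x (k + 1)‖ ^ 2 - 2 * (θ * ⟪p - x (k + 1), w - x (k + 1)⟫_ℝ)
                + θ ^ 2 * ‖w - x (k + 1)‖ ^ 2 := by
            rw [norm_sub_sq_real, real_inner_smul_right, norm_smul]
            simp only [Real.norm_eq_abs, mul_pow, sq_abs]
          rw [he, hexp2] at hd2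
          nlinarith [hd2, hθ0, sq_nonneg θ]
        have hall : ∀ θ > (0:ℝ),
            2 * ⟪p - x (k + 1), w - x (k + 1)⟫_ℝ ≤ θ * ‖w - x (k + 1)‖ ^ 2 := by
          intro θ hθ
          rcases le_total θ 1 with h | h
          · exact hkey θ hθ h
          · have h1 := hkey 1 one_pos le_rfl
            nlinarith
        have h0 := aux_le_of_forall_pos_le
          (f := fun θ => θ * ‖w - x (k + 1)‖ ^ 2)
          (continuous_id.mul continuous_const) hall
        simp only [zero_mul] at h0
        linarith
      -- nonexpansiveness towards solution points
      have hnon : ∀ z ∈ Xstar, ‖x (k + 1) - z‖ ^ 2 ≤ ‖p - z‖ ^ 2 := by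
        intro z hzs
        have h1 := hchar z (hXsub hzs)
        have hinner : 0 ≤ ⟪p - x (k + 1), x (k + 1) - z⟫_ℝ := by
          have he : x (k + 1) - z = -(z - x (k + 1)) := by abel
          rw [he, inner_neg_right]; linarith
        have hdecomp : p - z = (p - x (k + 1)) + (x (k + 1) - z) := by abel
        rw [hdecomp, norm_add_sq_real]
        nlinarith [sq_nonneg ‖p - x (k + 1)‖]
      -- the per-ε estimate
      have hmain : ∀ ε > 0, Metric.infDist (x (k + 1)) Xstar ^ 2 ≤
          (1 + α * ρ) * (D + ε) ^ 2 - α * (g (x k) - gstar) := by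
        intro ε hε
        obtain ⟨z, hzs, hdz⟩ := (Metric.infDist_lt_iff hXstarNe).1
          (show D < D + ε by linarith)
        have hr : ‖x k - z‖ < D + ε := by rwa [dist_eq_norm] at hdz
        have hr0 : (0:ℝ) ≤ ‖x k - z‖ := norm_nonneg _
        have hsubg := hζ k z
        rw [hgstar z hzs] at hsubg
        have hrev : ‖z - x k‖ = ‖x k - z‖ := norm_sub_rev _ _
        have hinner2 : (g (x k) - gstar) - ρ / 2 * ‖x k - z‖ ^ 2 ≤ ⟪ζ k, x k - z⟫_ℝ := by
          have he : x k - z = -(z - x k) := by abel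
          rw [he, inner_neg_right, norm_neg]
          linarith
        have hexp : ‖p - z‖ ^ 2
            = ‖x k - z‖ ^ 2 - 2 * (α * ⟪ζ k, x k - z⟫_ℝ) + α ^ 2 * S := by
          have he : p - z = (x k - z) - α • ζ k := by rw [hpdef]; abel
          rw [he, norm_sub_sq_real, real_inner_smul_right, norm_smul, real_inner_comm]
          rw [hSdef]
          simp [mul_pow, sq_abs]
        have step1 : Metric.infDist (x (k + 1)) Xstar ^ 2 ≤ ‖x (k + 1) - z‖ ^ 2 := by
          have h1 : Metric.infDist (x (k + 1)) Xstar ≤ dist (x (k + 1)) z :=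
            Metric.infDist_le_dist_of_mem hzs
          have h2 := pow_le_pow_left₀ Metric.infDist_nonneg h1 2
          rwa [dist_eq_norm] at h2
        have step2 := hnon z hzs
        have step3 : ‖p - z‖ ^ 2 ≤ (1 + α * ρ) * (D + ε) ^ 2 - α * (g (x k) - gstar) := by
          rw [hexp]
          have hmul : α * ((g (x k) - gstar) - ρ / 2 * ‖x k - z‖ ^ 2)
              ≤ α * ⟪ζ k, x k - z⟫_ℝ := mul_le_mul_of_nonneg_left hinner2 hα0
          have hsq : α ^ 2 * S = α * (g (x k) - gstar) := by
            rw [sq, mul_assoc, hαS]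
          rw [hsq]
          have hsq2 : ‖x k - z‖ ^ 2 ≤ (D + ε) ^ 2 := by nlinarith
          have hcoef := mul_le_mul_of_nonneg_left hsq2
            (show (0:ℝ) ≤ 1 + α * ρ by positivity)
          linarith [hmul, hcoef]
        linarith
      have hlim : Metric.infDist (x (k + 1)) Xstar ^ 2 ≤
          (1 + α * ρ) * (D + 0) ^ 2 - α * (g (x k) - gstar) :=
        aux_le_of_forall_pos_le
          ((continuous_const.mul ((continuous_const.add continuous_id).pow 2)).sub
            continuous_const) hmain
      refine ⟨hx1X, ?_⟩
      -- final algebra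
      have h1 : ρ * D ^ 2 ≤ γ * (g (x k) - gstar) := by nlinarith [hρD, hμD, hD0, hγ0]
      have hnum : (1 - γ) * ((g (x k) - gstar) * (g (x k) - gstar))
          ≤ (g (x k) - gstar) * (g (x k) - gstar) - ρ * D ^ 2 * (g (x k) - gstar) := by
        nlinarith [h1, hΔ0]
      have e1 : (1 - γ) * ((g (x k) - gstar) * (g (x k) - gstar)) / S
          ≤ α * (g (x k) - gstar) - α * ρ * D ^ 2 := by
        rw [div_le_iff₀ hS0]
        have k1 : α * (g (x k) - gstar) * S = (g (x k) - gstar) * (g (x k) - gstar) := by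
          rw [show α * (g (x k) - gstar) * S = α * S * (g (x k) - gstar) by ring, hαS]
        have k2 : α * ρ * D ^ 2 * S = ρ * D ^ 2 * (g (x k) - gstar) := by
          rw [show α * ρ * D ^ 2 * S = α * S * (ρ * D ^ 2) by ring, hαS]; ring
        linarith [hnum, k1, k2]
      have e2 : (1 - γ) * ((μ * D) * (μ * D)) / S
          ≤ (1 - γ) * ((g (x k) - gstar) * (g (x k) - gstar)) / S := by
        apply div_le_div_of_nonneg_right ?_ hS0.le
        have hsq : (μ * D) * (μ * D) ≤ (g (x k) - gstar) * (g (x k) - gstar) :=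
          mul_le_mul hμD hμD (mul_nonneg hμ.le hD0) hΔ0
        exact mul_le_mul_of_nonneg_left hsq (by linarith)
      have e3 : (1 - γ) * ((μ * D) * (μ * D)) / L ^ 2
          ≤ (1 - γ) * ((μ * D) * (μ * D)) / S := by
        apply div_le_div_of_nonneg_left ?_ hS0 hSL
        exact mul_nonneg (by linarith)
          (mul_nonneg (mul_nonneg hμ.le hD0) (mul_nonneg hμ.le hD0))
      have e4 : (1 - γ) * ((μ * D) * (μ * D)) / L ^ 2 = (1 - γ) * (μ / L) ^ 2 * D ^ 2 := by
        field_simp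
      have hlim' : Metric.infDist (x (k + 1)) Xstar ^ 2 ≤
          (1 + α * ρ) * D ^ 2 - α * (g (x k) - gstar) := by
        simpa using hlim
      rw [hc]
      linarith [hlim', e1, e2, e3, e4]
  -- iterates stay in the tube
  have mem : ∀ k, x k ∈ X ∧ Metric.infDist (x k) Xstar < γ * μ / ρ := by
    intro k
    induction k with
    | zero => exact ⟨hx0, hx0tube⟩
    | succ n ih =>
      obtain ⟨hmemX, hbnd⟩ := key n ih.1 ih.2
      refine ⟨hmemX, ?_⟩
      have h1 : Metric.infDist (x (n + 1)) Xstar ^ 2 ≤ Metric.infDist (x n) Xstar ^ 2 := by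
        have := mul_le_mul_of_nonneg_right hc1 (sq_nonneg (Metric.infDist (x n) Xstar))
        calc Metric.infDist (x (n + 1)) Xstar ^ 2
            ≤ c * Metric.infDist (x n) Xstar ^ 2 := hbnd
          _ ≤ 1 * Metric.infDist (x n) Xstar ^ 2 := this
          _ = Metric.infDist (x n) Xstar ^ 2 := one_mul _
      have h2 : Metric.infDist (x (n + 1)) Xstar ≤ Metric.infDist (x n) Xstar := by
        have := Real.sqrt_le_sqrt h1
        rwa [Real.sqrt_sq Metric.infDist_nonneg, Real.sqrt_sq Metric.infDist_nonneg] at this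
      exact lt_of_le_of_lt h2 ih.2
  intro k
  exact (key k (mem k).1 (mem k).2).2
end

section
/- (One step of the Polyak subgradient method.) Suppose g is μ-sharp on 𝒳 with 𝒳* nonempty and fix γ ∈ (0,1). Let x ∈ 𝒯_γ, let ζ ≠ 0 be a weak subgradient of g at x, and set x⁺ = proj_𝒳( x − ((g(x) − g*)/‖ζ‖²)·ζ ). Then dist²(x⁺, 𝒳*) ≤ (1 − (1 − γ)·μ²/‖ζ‖²)·dist²(x, 𝒳*). -/
open scoped InnerProductSpace

set_option maxHeartbeats 1000000 in
theorem polyak_one_step_aux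
    {F : Type*} [NormedAddCommGroup F] [InnerProductSpace ℝ F]
    (g : F → ℝ) (μ ρ γ : ℝ)
    (hμ : 0 < μ) (hρ : 0 < ρ) (hγ : γ ∈ Set.Ioo (0 : ℝ) 1)
    (X Xstar : Set F)
    (hXne : X.Nonempty) (hXcv : Convex ℝ X)
    (hXstar : Xstar = {x | x ∈ X ∧ ∀ y ∈ X, g x ≤ g y})
    (hXstarNe : Xstar.Nonempty)
    (gstar : ℝ) (hgstar : ∀ z ∈ Xstar, g z = gstar)
    (hsharp : ∀ x ∈ X, μ * Metric.infDist x Xstar ≤ g x - gstar)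
    (x : F) (hxX : x ∈ X)
    (hxtube : Metric.infDist x Xstar < γ * μ / ρ)
    (ζ : F) (hζ0 : ζ ≠ 0)
    (hζ : ∀ y, g x + ⟪ζ, y - x⟫_ℝ - ρ / 2 * ‖y - x‖ ^ 2 ≤ g y)
    (xp : F) (hxpX : xp ∈ X)
    (hxp : ∀ y ∈ X, dist (x - ((g x - gstar) / ‖ζ‖ ^ 2) • ζ) xp ≤
      dist (x - ((g x - gstar) / ‖ζ‖ ^ 2) • ζ) y) :
    Metric.infDist xp Xstar ^ 2 ≤
      (1 - (1 - γ) * μ ^ 2 / ‖ζ‖ ^ 2) * Metric.infDist x Xstar ^ 2 := by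
  have hS : (0:ℝ) < ‖ζ‖^2 := by
    have : 0 < ‖ζ‖ := norm_pos_iff.mpr hζ0
    positivity
  set D := Metric.infDist x Xstar with hDdef
  have hD0 : 0 ≤ D := Metric.infDist_nonneg
  set h := g x - gstar with hhdef
  set S := ‖ζ‖^2 with hSdef
  set t := h / S with htdef
  have hsx : μ * D ≤ h := hsharp x hxX
  have hh0 : 0 ≤ h := le_trans (mul_nonneg hμ.le hD0) hsx
  have ht0 : 0 ≤ t := div_nonneg hh0 hS.le
  have hts : h = t * S := by rw [htdef, div_mul_cancel₀ h hS.ne']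
  set y0 := x - t • ζ with hy0def
  have hXsub : Xstar ⊆ X := by rw [hXstar]; intro z hz; exact hz.1
  have hne : Nonempty X := ⟨⟨hXne.choose, hXne.choose_spec⟩⟩
  have hinf : ‖y0 - xp‖ = ⨅ w : X, ‖y0 - w‖ := by
    refine le_antisymm (le_ciInf fun w => ?_) ?_
    · rw [← dist_eq_norm, ← dist_eq_norm]; exact hxp w w.2
    · have hbdd : BddBelow (Set.range fun w : X => ‖y0 - (w : F)‖) :=
        ⟨0, by rintro a ⟨w, rfl⟩; exact norm_nonneg _⟩
      exact ciInf_le hbdd ⟨xp, hxpX⟩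
  have hvar := (norm_eq_iInf_iff_real_inner_le_zero hXcv hxpX).mp hinf
  have key2 : ∀ z ∈ Xstar,
      Metric.infDist xp Xstar ^ 2 ≤ (1 + ρ*t) * (dist x z)^2 - t^2*S := by
    intro z hz
    have hzX := hXsub hz
    have hA1 : Metric.infDist xp Xstar ≤ dist xp z := Metric.infDist_le_dist_of_mem hz
    have hA0 : 0 ≤ Metric.infDist xp Xstar := Metric.infDist_nonneg
    have hsq : Metric.infDist xp Xstar ^ 2 ≤ ‖xp - z‖^2 := by
      rw [← dist_eq_norm]
      exact pow_le_pow_left₀ hA0 hA1 2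
    have hv := hvar z hzX
    have hstep1 : ‖xp - z‖^2 ≤ ‖y0 - z‖^2 := by
      have e : y0 - z = (y0 - xp) + (xp - z) := by abel
      rw [e, norm_add_sq_real]
      have hpos : (0:ℝ) ≤ ⟪y0 - xp, xp - z⟫_ℝ := by
        have e2 : xp - z = -(z - xp) := by abel
        rw [e2, inner_neg_right]; linarith
      nlinarith [sq_nonneg ‖y0 - xp‖]
    have hexp : ‖y0 - z‖^2 = ‖x - z‖^2 - 2*t*⟪ζ, x - z⟫_ℝ + t^2*S := by
      have e : y0 - z = (x - z) - t • ζ := by rw [hy0def]; abel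
      rw [e, norm_sub_sq_real, real_inner_smul_right, real_inner_comm,
        norm_smul, mul_pow, hSdef]
      simp [Real.norm_eq_abs, sq_abs]
      ring
    have hI : ⟪ζ, z - x⟫_ℝ ≤ -h + ρ/2 * ‖z - x‖^2 := by
      have h1 := hζ z
      have h2 : g z = gstar := hgstar z hz
      rw [h2] at h1
      linarith [h1]
    have hI2 : h - ρ/2 * ‖x - z‖^2 ≤ ⟪ζ, x - z⟫_ℝ := by
      have e2 : x - z = -(z - x) := by abel
      rw [e2, inner_neg_right, norm_neg]
      linarith
    have hdxz : dist x z = ‖x - z‖ := dist_eq_norm x z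
    rw [hdxz]
    nlinarith [mul_le_mul_of_nonneg_left hI2 (by linarith : (0:ℝ) ≤ 2*t)]
  have h1t : (0:ℝ) < 1 + ρ*t := by nlinarith [mul_nonneg hρ.le ht0]
  have hmain : Metric.infDist xp Xstar ^ 2 ≤ (1 + ρ*t) * D^2 - t^2*S := by
    by_contra hcon
    push_neg at hcon
    set δ := Metric.infDist xp Xstar ^ 2 - ((1 + ρ*t) * D^2 - t^2*S) with hδdef
    have hδ : 0 < δ := by simp [hδdef]; linarith
    set K := (1 + ρ*t) * (2*D + 1) with hKdef
    have hK : 0 < K := by nlinarith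
    set ε := min 1 (δ / (2*K)) with hεdef
    have hε0 : 0 < ε := lt_min one_pos (div_pos hδ (by linarith))
    have hε1 : ε ≤ 1 := min_le_left _ _
    have hεK : K * ε ≤ δ/2 := by
      have h2 : ε ≤ δ / (2*K) := min_le_right _ _
      have h3 : K * (δ / (2*K)) = δ/2 := by field_simp
      nlinarith [mul_le_mul_of_nonneg_left h2 hK.le]
    have hlt : Metric.infDist x Xstar < D + ε := by rw [← hDdef]; linarith
    obtain ⟨z, hz, hzd⟩ := (Metric.infDist_lt_iff hXstarNe).mp hlt
    have hk := key2 z hz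
    have hr0 : 0 ≤ dist x z := dist_nonneg
    have hr2 : dist x z ^ 2 ≤ (D + ε)^2 := by nlinarith
    nlinarith [mul_le_mul_of_nonneg_left hr2 h1t.le]
  have hρD : ρ * D ≤ γ * μ := by
    have := (lt_div_iff₀ hρ).mp hxtube
    nlinarith
  have hfin : (1 + ρ*t) * D^2 - t^2*S ≤ (1 - (1-γ)*μ^2/S) * D^2 := by
    rw [← mul_le_mul_iff_left₀ hS]
    have e : ((1 - (1-γ)*μ^2/S) * D^2) * S = D^2*S - (1-γ)*μ^2*D^2 := by
      field_simp
    rw [e]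
    have hμD2 : (μ*D)*(μ*D) ≤ h*h := mul_le_mul hsx hsx (mul_nonneg hμ.le hD0) hh0
    have hγ1 : γ < 1 := hγ.2
    have hγ0 : 0 < γ := hγ.1
    have h2 : h*(ρ*D)*D ≤ h*(γ*μ)*D :=
      mul_le_mul_of_nonneg_right (mul_le_mul_of_nonneg_left hρD hh0) hD0
    have h3 : (γ*h)*(μ*D) ≤ (γ*h)*h :=
      mul_le_mul_of_nonneg_left hsx (mul_nonneg hγ0.le hh0)
    have egoal : ((1 + ρ*t) * D^2 - t^2*S) * S = D^2*S + ρ*h*D^2 - h*h := by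
      rw [hts]; ring
    rw [egoal]
    have h4 : (0:ℝ) ≤ (1-γ)*(h*h - μ*D*(μ*D)) :=
      mul_nonneg (by linarith) (by linarith)
    nlinarith [h2, h3, h4]
  linarith

/-- **One step of the Polyak subgradient method.**
If `g` is `μ`-sharp on `X` with nonempty solution set `Xstar`, `γ ∈ (0,1)`, `x ∈ 𝒯_γ`,
`ζ ≠ 0` is a weak subgradient of `g` at `x`, and
`x⁺ = proj_X(x - ((g(x) - g*)/‖ζ‖²)·ζ)`, then
`dist²(x⁺, Xstar) ≤ (1 - (1-γ)·μ²/‖ζ‖²)·dist²(x, Xstar)`. -/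
theorem polyak_one_step
    {d : ℕ} (hd : 1 ≤ d)
    (g : EuclideanSpace ℝ (Fin d) → ℝ) (μ ρ γ : ℝ)
    (hμ : 0 < μ) (hρ : 0 < ρ) (hγ : γ ∈ Set.Ioo (0 : ℝ) 1)
    (X Xstar : Set (EuclideanSpace ℝ (Fin d)))
    (hXne : X.Nonempty) (hXcl : IsClosed X) (hXcv : Convex ℝ X)
    (hXstar : Xstar = {x | x ∈ X ∧ ∀ y ∈ X, g x ≤ g y})
    (hXstarNe : Xstar.Nonempty)
    -- `gstar` is the minimal value of `g` over `X`
    (gstar : ℝ) (hgstar : ∀ z ∈ Xstar, g z = gstar)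
    -- sharpness
    (hsharp : ∀ x ∈ X, μ * Metric.infDist x Xstar ≤ g x - gstar)
    -- `x` lies in the tube `𝒯_γ`
    (x : EuclideanSpace ℝ (Fin d)) (hxX : x ∈ X)
    (hxtube : Metric.infDist x Xstar < γ * μ / ρ)
    -- `ζ ≠ 0` is a weak subgradient of `g` at `x`
    (ζ : EuclideanSpace ℝ (Fin d)) (hζ0 : ζ ≠ 0)
    (hζ : ∀ y, g x + ⟪ζ, y - x⟫_ℝ - ρ / 2 * ‖y - x‖ ^ 2 ≤ g y)
    -- `xp` is the projection onto `X` of the Polyak subgradient step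
    (xp : EuclideanSpace ℝ (Fin d)) (hxpX : xp ∈ X)
    (hxp : ∀ y ∈ X, dist (x - ((g x - gstar) / ‖ζ‖ ^ 2) • ζ) xp ≤
      dist (x - ((g x - gstar) / ‖ζ‖ ^ 2) • ζ) y) :
    Metric.infDist xp Xstar ^ 2 ≤
      (1 - (1 - γ) * μ ^ 2 / ‖ζ‖ ^ 2) * Metric.infDist x Xstar ^ 2 := by
  exact polyak_one_step_aux g μ ρ γ hμ hρ hγ X Xstar hXne hXcv hXstar hXstarNe
    gstar hgstar hsharp x hxX hxtube ζ hζ0 hζ xp hxpX hxp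
end

section
/- (Basic recurrence for the normalized subgradient step.) Suppose g is μ-sharp on 𝒳 with 𝒳* nonempty, and fix L with 0 < μ ≤ L and set τ = μ/L. Let x ∈ 𝒯₁, let ζ ≠ 0 be a weak subgradient of g at x with ‖ζ‖ ≤ L, let α > 0, and set x⁺ = proj_𝒳( x − α·ζ/‖ζ‖ ). Then, writing E(x) = dist²(x, 𝒳*), one has E(x⁺) ≤ (1 + ρα/L)·E(x) − 2ατ·√(E(x)) + α². -/
open scoped InnerProductSpace

/-- **Basic recurrence for the normalized subgradient step.**
If `g` is `μ`-sharp on `X` with nonempty solution set `Xstar`, `0 < μ ≤ L`, `τ = μ/L`,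
`x ∈ 𝒯₁`, `ζ ≠ 0` is a weak subgradient of `g` at `x` with `‖ζ‖ ≤ L`, `α > 0`, and
`x⁺ = proj_X(x - α·ζ/‖ζ‖)`, then, writing `E(x) = dist²(x, Xstar)`,
`E(x⁺) ≤ (1 + ρα/L)·E(x) - 2ατ·√(E(x)) + α²`. -/
theorem basic_recurrence
    {d : ℕ} (hd : 1 ≤ d)
    (g : EuclideanSpace ℝ (Fin d) → ℝ) (μ ρ L α : ℝ)
    (hμ : 0 < μ) (hρ : 0 < ρ) (hμL : μ ≤ L) (hα : 0 < α)
    (X Xstar : Set (EuclideanSpace ℝ (Fin d)))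
    (hXne : X.Nonempty) (hXcl : IsClosed X) (hXcv : Convex ℝ X)
    (hXstar : Xstar = {x | x ∈ X ∧ ∀ y ∈ X, g x ≤ g y})
    (hXstarNe : Xstar.Nonempty)
    -- `gstar` is the minimal value of `g` over `X`
    (gstar : ℝ) (hgstar : ∀ z ∈ Xstar, g z = gstar)
    -- sharpness
    (hsharp : ∀ x ∈ X, μ * Metric.infDist x Xstar ≤ g x - gstar)
    -- `x` lies in the tube `𝒯₁`
    (x : EuclideanSpace ℝ (Fin d)) (hxX : x ∈ X)
    (hxtube : Metric.infDist x Xstar < μ / ρ)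
    -- `ζ ≠ 0` is a weak subgradient of `g` at `x` with `‖ζ‖ ≤ L`
    (ζ : EuclideanSpace ℝ (Fin d)) (hζ0 : ζ ≠ 0) (hζL : ‖ζ‖ ≤ L)
    (hζ : ∀ y, g x + ⟪ζ, y - x⟫_ℝ - ρ / 2 * ‖y - x‖ ^ 2 ≤ g y)
    -- `xp` is the projection onto `X` of the normalized subgradient step
    (xp : EuclideanSpace ℝ (Fin d)) (hxpX : xp ∈ X)
    (hxp : ∀ y ∈ X, dist (x - (α / ‖ζ‖) • ζ) xp ≤ dist (x - (α / ‖ζ‖) • ζ) y) :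
    Metric.infDist xp Xstar ^ 2 ≤
      (1 + ρ * α / L) * Metric.infDist x Xstar ^ 2
        - 2 * α * (μ / L) * Real.sqrt (Metric.infDist x Xstar ^ 2) + α ^ 2 := by
  have hL : 0 < L := lt_of_lt_of_le hμ hμL
  have hn : 0 < ‖ζ‖ := norm_pos_iff.mpr hζ0
  set D := Metric.infDist x Xstar with hDdef
  have hD0 : 0 ≤ D := Metric.infDist_nonneg
  have hsq : Real.sqrt (D ^ 2) = D := Real.sqrt_sq hD0
  rw [hsq]
  set z := x - (α / ‖ζ‖) • ζ with hzdef
  set p := α / ‖ζ‖ with hpdef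
  set q := α / L with hqdef
  have hp0 : 0 < p := div_pos hα hn
  have hq0 : 0 < q := div_pos hα hL
  have hqp : q ≤ p := by
    apply div_le_div_of_nonneg_left hα.le hn hζL
  -- variational inequality for the projection
  haveI : Nonempty X := ⟨⟨xp, hxpX⟩⟩
  have hiinf : ‖z - xp‖ = ⨅ w : X, ‖z - w‖ := by
    apply le_antisymm
    · exact le_ciInf fun w => by
        simpa [dist_eq_norm] using hxp w w.2
    · have hbdd : BddBelow (Set.range fun w : X => ‖z - ↑w‖) := by
        refine ⟨0, ?_⟩
        rintro b ⟨w, rfl⟩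
        exact norm_nonneg _
      exact ciInf_le hbdd ⟨xp, hxpX⟩
  have hvar : ∀ w ∈ X, ⟪z - xp, w - xp⟫_ℝ ≤ 0 :=
    (norm_eq_iInf_iff_real_inner_le_zero hXcv hxpX).mp hiinf
  -- the tube condition gives `0 ≤ μ D - ρ/2 D²`
  have hT0 : 0 ≤ μ * D - ρ / 2 * D ^ 2 := by
    have : D * ρ < μ := (lt_div_iff₀ hρ).mp hxtube
    nlinarith
  set K : ℝ := 1 + ρ * p with hKdef
  have hK0 : 0 < K := by positivity
  refine le_of_forall_pos_le_add fun ε hε => ?_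
  -- pick an approximate nearest point in Xstar
  have hr : D < Real.sqrt (D ^ 2 + ε / K) := by
    have h1 : 0 < ε / K := div_pos hε hK0
    exact (Real.lt_sqrt hD0).mpr (by linarith)
  obtain ⟨w, hwS, hwd⟩ := (Metric.infDist_lt_iff hXstarNe).mp hr
  have hwX : w ∈ X := by rw [hXstar] at hwS; exact hwS.1
  have hgw : g w = gstar := hgstar w hwS
  set s := dist x w with hsdef
  have hs0 : 0 ≤ s := dist_nonneg
  have hDs : D ≤ s := Metric.infDist_le_dist_of_mem hwS
  have hs2 : s ^ 2 < D ^ 2 + ε / K := by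
    have := Real.sq_sqrt (show (0:ℝ) ≤ D ^ 2 + ε / K by positivity)
    nlinarith [hwd, Real.sqrt_nonneg (D ^ 2 + ε / K)]
  have hround : K * (s ^ 2 - D ^ 2) ≤ ε := by
    have : s ^ 2 - D ^ 2 < ε / K := by linarith
    have := (mul_lt_mul_of_pos_left this hK0)
    rw [mul_div_cancel₀ _ hK0.ne'] at this
    linarith
  -- inner product lower bound from weak subgradient and sharpness
  set I : ℝ := ⟪ζ, x - w⟫_ℝ with hIdef
  have hI : μ * D - ρ / 2 * s ^ 2 ≤ I := by
    have h1 := hζ w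
    rw [hgw] at h1
    have h2 : ⟪ζ, w - x⟫_ℝ = -I := by
      rw [hIdef, ← inner_neg_right, neg_sub]
    have h3 : ‖w - x‖ = s := by rw [hsdef, dist_eq_norm, norm_sub_rev]
    have h4 := hsharp x hxX
    rw [h2, h3] at h1
    linarith
  -- step 1 : infDist xp ² ≤ ‖xp - w‖²
  have step1 : Metric.infDist xp Xstar ^ 2 ≤ ‖xp - w‖ ^ 2 := by
    have h1 : Metric.infDist xp Xstar ≤ dist xp w := Metric.infDist_le_dist_of_mem hwS
    have h2 : (0:ℝ) ≤ Metric.infDist xp Xstar := Metric.infDist_nonneg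
    rw [dist_eq_norm] at h1
    exact pow_le_pow_left₀ h2 h1 2
  -- step 2 : ‖xp - w‖² ≤ ‖z - w‖²
  have step2 : ‖xp - w‖ ^ 2 ≤ ‖z - w‖ ^ 2 := by
    have hv := hvar w hwX
    have hexp : ‖z - w‖ ^ 2 =
        ‖z - xp‖ ^ 2 + 2 * ⟪z - xp, xp - w⟫_ℝ + ‖xp - w‖ ^ 2 := by
      have := norm_add_sq_real (z - xp) (xp - w)
      rw [sub_add_sub_cancel] at this
      linarith
    have hneg : ⟪z - xp, xp - w⟫_ℝ = -⟪z - xp, w - xp⟫_ℝ := by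
      rw [← inner_neg_right, neg_sub]
    rw [hneg] at hexp
    have hzz := sq_nonneg ‖z - xp‖
    linarith
  -- step 3 : expand ‖z - w‖²
  have step3 : ‖z - w‖ ^ 2 = s ^ 2 - 2 * p * I + α ^ 2 := by
    have h1 : z - w = (x - w) - p • ζ := by
      rw [hzdef]; abel
    rw [h1, norm_sub_sq_real]
    have h2 : ⟪x - w, p • ζ⟫_ℝ = p * I := by
      rw [real_inner_smul_right, hIdef, real_inner_comm]
    have h3 : ‖p • ζ‖ ^ 2 = α ^ 2 := by
      rw [norm_smul, mul_pow, Real.norm_eq_abs, sq_abs, hpdef]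
      field_simp
    have h4 : ‖x - w‖ = s := by rw [hsdef, dist_eq_norm]
    rw [h2, h3, h4]; ring
  -- combine
  have hgoal : (1 + ρ * α / L) * D ^ 2 - 2 * α * (μ / L) * D + α ^ 2 =
      (1 + ρ * q) * D ^ 2 - 2 * q * μ * D + α ^ 2 := by
    rw [hqdef]; ring
  rw [hgoal]
  have h2p : 2 * p * (μ * D - ρ / 2 * s ^ 2) ≤ 2 * p * I :=
    mul_le_mul_of_nonneg_left hI (by positivity)
  have h2q : 2 * q * (μ * D - ρ / 2 * D ^ 2) ≤ 2 * p * (μ * D - ρ / 2 * D ^ 2) :=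
    mul_le_mul_of_nonneg_right (by linarith) hT0
  have e1 : s ^ 2 - 2 * p * (μ * D - ρ / 2 * s ^ 2) + α ^ 2
      = D ^ 2 + K * (s ^ 2 - D ^ 2) - 2 * p * (μ * D - ρ / 2 * D ^ 2) + α ^ 2 := by
    rw [hKdef]; ring
  have e2 : (1 + ρ * q) * D ^ 2 - 2 * q * μ * D
      = D ^ 2 - 2 * q * (μ * D - ρ / 2 * D ^ 2) := by ring
  clear_value D s p q K I
  linarith [step1, step2, step3.le, h2p, h2q, hround, e1, e2]
end

section
/- (Subgradient-norm form of the one-step estimate.) Suppose g is μ-sharp on 𝒳 with 𝒳* nonempty. Let x ∈ 𝒳, let ζ ≠ 0 be a weak subgradient of g at x, let α > 0, and set x⁺ = proj_𝒳( x − α·ζ/‖ζ‖ ). Then, writing E(x) = dist²(x, 𝒳*), one has E(x⁺) ≤ (1 + αρ/‖ζ‖)·E(x) − (2αμ/‖ζ‖)·√(E(x)) + α². -/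
set_option maxHeartbeats 1000000


open scoped InnerProductSpace

/-- **Subgradient-norm form of the one-step estimate.**
If `g` is `μ`-sharp on `X` with nonempty solution set `Xstar`, `x ∈ X`, `ζ ≠ 0` is a weak
subgradient of `g` at `x`, `α > 0`, and `x⁺ = proj_X(x - α·ζ/‖ζ‖)`, then, writing
`E(x) = dist²(x, Xstar)`, `E(x⁺) ≤ (1 + αρ/‖ζ‖)·E(x) - (2αμ/‖ζ‖)·√(E(x)) + α²`. -/
theorem one_step_estimate_subgradient_norm
    {d : ℕ} (hd : 1 ≤ d)
    (g : EuclideanSpace ℝ (Fin d) → ℝ) (μ ρ α : ℝ)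
    (hμ : 0 < μ) (hρ : 0 < ρ) (hα : 0 < α)
    (X Xstar : Set (EuclideanSpace ℝ (Fin d)))
    (hXne : X.Nonempty) (hXcl : IsClosed X) (hXcv : Convex ℝ X)
    (hXstar : Xstar = {x | x ∈ X ∧ ∀ y ∈ X, g x ≤ g y})
    (hXstarNe : Xstar.Nonempty)
    -- `gstar` is the minimal value of `g` over `X`
    (gstar : ℝ) (hgstar : ∀ z ∈ Xstar, g z = gstar)
    -- sharpness
    (hsharp : ∀ x ∈ X, μ * Metric.infDist x Xstar ≤ g x - gstar)
    (x : EuclideanSpace ℝ (Fin d)) (hxX : x ∈ X)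
    -- `ζ ≠ 0` is a weak subgradient of `g` at `x`
    (ζ : EuclideanSpace ℝ (Fin d)) (hζ0 : ζ ≠ 0)
    (hζ : ∀ y, g x + ⟪ζ, y - x⟫_ℝ - ρ / 2 * ‖y - x‖ ^ 2 ≤ g y)
    -- `xp` is the projection onto `X` of the normalized subgradient step
    (xp : EuclideanSpace ℝ (Fin d)) (hxpX : xp ∈ X)
    (hxp : ∀ y ∈ X, dist (x - (α / ‖ζ‖) • ζ) xp ≤ dist (x - (α / ‖ζ‖) • ζ) y) :
    Metric.infDist xp Xstar ^ 2 ≤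
      (1 + α * ρ / ‖ζ‖) * Metric.infDist x Xstar ^ 2
        - 2 * α * μ / ‖ζ‖ * Real.sqrt (Metric.infDist x Xstar ^ 2) + α ^ 2 := by
  have hζn : (0:ℝ) < ‖ζ‖ := norm_pos_iff.mpr hζ0
  set s : ℝ := α / ‖ζ‖ with hs
  have hspos : 0 < s := div_pos hα hζn
  set w : EuclideanSpace ℝ (Fin d) := x - s • ζ with hw
  set D : ℝ := Metric.infDist x Xstar with hD
  have hDnn : 0 ≤ D := Metric.infDist_nonneg
  have hsqrt : Real.sqrt (D ^ 2) = D := Real.sqrt_sq hDnn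
  -- variational inequality for the projection
  have hvar : ∀ z ∈ X, ⟪w - xp, z - xp⟫_ℝ ≤ 0 := by
    intro z hzX
    by_contra hq
    push_neg at hq
    set q : ℝ := ⟪w - xp, z - xp⟫_ℝ with hqdef
    set t : ℝ := min 1 (q / (‖z - xp‖ ^ 2 + 1)) with htdef
    have hN : (0:ℝ) < ‖z - xp‖ ^ 2 + 1 := by positivity
    have htpos : 0 < t := lt_min one_pos (div_pos hq hN)
    have ht1 : t ≤ 1 := min_le_left _ _
    have ht2 : t ≤ q / (‖z - xp‖ ^ 2 + 1) := min_le_right _ _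
    have hyX : xp + t • (z - xp) ∈ X := by
      have hcomb := hXcv hxpX hzX (by linarith : (0:ℝ) ≤ 1 - t)
        (le_of_lt htpos) (by ring : (1 - t) + t = 1)
      have heq : (1 - t) • xp + t • z = xp + t • (z - xp) := by module
      rwa [heq] at hcomb
    have hle := hxp _ hyX
    rw [dist_eq_norm, dist_eq_norm] at hle
    have hsq : ‖w - xp‖ ^ 2 ≤ ‖w - (xp + t • (z - xp))‖ ^ 2 := by
      have := norm_nonneg (w - xp)
      nlinarith
    have hexp : ‖w - (xp + t • (z - xp))‖ ^ 2
        = ‖w - xp‖ ^ 2 - 2 * t * q + t ^ 2 * ‖z - xp‖ ^ 2 := by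
      have h := @norm_sub_sq_real (EuclideanSpace ℝ (Fin d)) _ _ (w - xp) (t • (z - xp))
      have heq2 : w - (xp + t • (z - xp)) = (w - xp) - t • (z - xp) := by abel
      rw [heq2, h, real_inner_smul_right, norm_smul, Real.norm_eq_abs,
        abs_of_pos htpos, mul_pow, ← hqdef]
      ring
    have h2q : 2 * q ≤ t * ‖z - xp‖ ^ 2 := by
      rw [hexp] at hsq; nlinarith
    have h3 : t * ‖z - xp‖ ^ 2 < q := by
      have : t * ‖z - xp‖ ^ 2 ≤ (q / (‖z - xp‖ ^ 2 + 1)) * ‖z - xp‖ ^ 2 :=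
        mul_le_mul_of_nonneg_right ht2 (by positivity)
      have h4 : (q / (‖z - xp‖ ^ 2 + 1)) * ‖z - xp‖ ^ 2 < q := by
        rw [div_mul_eq_mul_div, div_lt_iff₀ hN]; nlinarith
      linarith
    linarith
  -- key per-point estimate
  have key : ∀ z ∈ Xstar,
      ‖xp - z‖ ^ 2 ≤ (1 + s * ρ) * ‖x - z‖ ^ 2 - 2 * s * μ * D + α ^ 2 := by
    intro z hz
    have hzX : z ∈ X := by rw [hXstar] at hz; exact hz.1
    have hgz : g z = gstar := hgstar z hz
    -- Step A: ‖xp - z‖² ≤ ‖w - z‖²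
    have hA : ‖xp - z‖ ^ 2 ≤ ‖w - z‖ ^ 2 := by
      have h2 : ⟪w - xp, z - xp⟫_ℝ ≤ 0 := hvar z hzX
      have hexp : ‖w - z‖ ^ 2
          = ‖w - xp‖ ^ 2 - 2 * ⟪w - xp, z - xp⟫_ℝ + ‖z - xp‖ ^ 2 := by
        have := @norm_sub_sq_real (EuclideanSpace ℝ (Fin d)) _ _ (w - xp) (z - xp)
        simpa [sub_sub_sub_cancel_right] using this
      have h3 : ‖z - xp‖ = ‖xp - z‖ := norm_sub_rev _ _
      rw [h3] at hexp
      nlinarith [sq_nonneg ‖w - xp‖, h2]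
    -- Step B: expand ‖w - z‖²
    have hsζ : ‖s • ζ‖ = α := by
      rw [norm_smul, Real.norm_eq_abs, abs_of_pos hspos, hs,
        div_mul_cancel₀ _ (ne_of_gt hζn)]
    have hB : ‖w - z‖ ^ 2
        = ‖x - z‖ ^ 2 - 2 * s * ⟪ζ, x - z⟫_ℝ + α ^ 2 := by
      have hexp := @norm_sub_sq_real (EuclideanSpace ℝ (Fin d)) _ _ (x - z) (s • ζ)
      have hwz : w - z = (x - z) - s • ζ := by rw [hw]; abel
      rw [hwz, hexp, hsζ, real_inner_smul_right, real_inner_comm]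
      ring
    -- Step C: lower bound on the inner product
    have hC : μ * D - ρ / 2 * ‖x - z‖ ^ 2 ≤ ⟪ζ, x - z⟫_ℝ := by
      have h1 := hζ z
      rw [hgz] at h1
      have h2 := hsharp x hxX
      have h3 : ⟪ζ, z - x⟫_ℝ = -⟪ζ, x - z⟫_ℝ := by
        rw [show z - x = -(x - z) by abel, inner_neg_right]
      have h4 : ‖z - x‖ = ‖x - z‖ := norm_sub_rev _ _
      rw [h3, h4] at h1
      linarith
    nlinarith [hA, hB, hC]
  -- pass to the infimum
  rw [hsqrt]
  have hcoef : α * ρ / ‖ζ‖ = s * ρ := by rw [hs]; ring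
  have hcoef2 : 2 * α * μ / ‖ζ‖ = 2 * s * μ := by rw [hs]; ring
  rw [hcoef, hcoef2]
  have hc : (0:ℝ) < 1 + s * ρ := by positivity
  refine le_of_forall_pos_le_add ?_
  intro ε hε
  set δ : ℝ := min 1 (ε / ((1 + s * ρ) * (2 * D + 1))) with hδdef
  have hδpos : 0 < δ := by
    apply lt_min one_pos
    apply div_pos hε
    positivity
  obtain ⟨z, hz, hdz⟩ := (Metric.infDist_lt_iff hXstarNe).mp
    (show D < D + δ by linarith)
  have hdznn : 0 ≤ dist x z := dist_nonneg
  have hsq : dist x z ^ 2 ≤ D ^ 2 + ε / (1 + s * ρ) := by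
    have hδ1 : δ ≤ 1 := min_le_left _ _
    have hδ2 : δ ≤ ε / ((1 + s * ρ) * (2 * D + 1)) := min_le_right _ _
    have h5 : δ * ((1 + s * ρ) * (2 * D + 1)) ≤ ε := by
      rw [← le_div_iff₀ (by positivity)]; exact hδ2
    have h6 : dist x z ^ 2 ≤ (D + δ) ^ 2 := by nlinarith
    have h7 : (D + δ) ^ 2 ≤ D ^ 2 + δ * (2 * D + 1) := by nlinarith
    have h8 : δ * (2 * D + 1) ≤ ε / (1 + s * ρ) := by
      rw [le_div_iff₀ hc]; nlinarith
    linarith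
  have h9 : Metric.infDist xp Xstar ≤ dist xp z := Metric.infDist_le_dist_of_mem hz
  have h10 : Metric.infDist xp Xstar ^ 2 ≤ dist xp z ^ 2 := by
    have := Metric.infDist_nonneg (x := xp) (s := Xstar)
    nlinarith
  have h11 := key z hz
  rw [dist_eq_norm] at hsq h10
  have h12 : (1 + s * ρ) * ‖x - z‖ ^ 2
      ≤ (1 + s * ρ) * D ^ 2 + ε := by
    calc (1 + s * ρ) * ‖x - z‖ ^ 2 ≤ (1 + s * ρ) * (D ^ 2 + ε / (1 + s * ρ)) :=
          by exact mul_le_mul_of_nonneg_left hsq (le_of_lt hc)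
      _ = (1 + s * ρ) * D ^ 2 + ε := by field_simp
  calc Metric.infDist xp Xstar ^ 2 ≤ ‖xp - z‖ ^ 2 := h10
    _ ≤ (1 + s * ρ) * ‖x - z‖ ^ 2 - 2 * s * μ * D + α ^ 2 := h11
    _ ≤ (1 + s * ρ) * D ^ 2 - 2 * s * μ * D + α ^ 2 + ε := by linarith
end

section
/- (Contraction inequality for the constant-stepsize subgradient method.) Suppose g is μ-sharp on 𝒳 with 𝒳* nonempty, fix L with 0 < μ ≤ L, set τ = μ/L, and fix a stepsize α with 0 < α < τ·μ/ρ (so that μ² − αρL > 0). Define E* = ( αL/(μ + √(μ² − αρL)) )². Let x ∈ 𝒯₁, let ζ ≠ 0 be a weak subgradient of g at x with ‖ζ‖ ≤ L, and set x⁺ = proj_𝒳( x − α·ζ/‖ζ‖ ). Then, writing E(x) = dist²(x, 𝒳*), one has E(x⁺) − E* ≤ q·(E(x) − E*), where q = 1 + (α/L)·(ρ − 2μ/(√(E(x)) + √(E*))) satisfies q < 1. -/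
open scoped InnerProductSpace

private lemma eps_limit {A B C : ℝ} (hC : 0 < C)
    (h : ∀ ε : ℝ, 0 < ε → ε ≤ 1 → A ≤ B + C * ε) : A ≤ B := by
  by_contra h'
  push_neg at h'
  have hε : (0:ℝ) < min 1 ((A - B) / (2 * C)) :=
    lt_min one_pos (div_pos (by linarith) (by positivity))
  have h2 := h _ hε (min_le_left _ _)
  have h3 : C * min 1 ((A - B) / (2 * C)) ≤ C * ((A - B) / (2 * C)) :=
    mul_le_mul_of_nonneg_left (min_le_right _ _) hC.le
  have h4 : C * ((A - B) / (2 * C)) = (A - B) / 2 := by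
    field_simp [hC.ne']
  linarith

set_option maxHeartbeats 1000000 in
/-- **Contraction inequality for the constant-stepsize subgradient method.**
If `g` is `μ`-sharp on `X` with nonempty solution set `Xstar`, `0 < μ ≤ L`, `τ = μ/L`,
`0 < α < τμ/ρ`, `E* = (αL/(μ + √(μ² - αρL)))²`, `x ∈ 𝒯₁`, `ζ ≠ 0` is a weak subgradient of
`g` at `x` with `‖ζ‖ ≤ L`, and `x⁺ = proj_X(x - α·ζ/‖ζ‖)`, then
`E(x⁺) - E* ≤ q·(E(x) - E*)`, where `q = 1 + (α/L)·(ρ - 2μ/(√(E(x)) + √(E*)))` and `q < 1`. -/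
theorem contraction_inequality
    {d : ℕ} (hd : 1 ≤ d)
    (g : EuclideanSpace ℝ (Fin d) → ℝ) (μ ρ L α : ℝ)
    (hμ : 0 < μ) (hρ : 0 < ρ) (hμL : μ ≤ L)
    (hα : 0 < α) (hα' : α < (μ / L) * (μ / ρ))
    (X Xstar : Set (EuclideanSpace ℝ (Fin d)))
    (hXne : X.Nonempty) (hXcl : IsClosed X) (hXcv : Convex ℝ X)
    (hXstar : Xstar = {x | x ∈ X ∧ ∀ y ∈ X, g x ≤ g y})
    (hXstarNe : Xstar.Nonempty)
    -- `gstar` is the minimal value of `g` over `X`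
    (gstar : ℝ) (hgstar : ∀ z ∈ Xstar, g z = gstar)
    -- sharpness
    (hsharp : ∀ x ∈ X, μ * Metric.infDist x Xstar ≤ g x - gstar)
    -- `x` lies in the tube `𝒯₁`
    (x : EuclideanSpace ℝ (Fin d)) (hxX : x ∈ X)
    (hxtube : Metric.infDist x Xstar < μ / ρ)
    -- `ζ ≠ 0` is a weak subgradient of `g` at `x` with `‖ζ‖ ≤ L`
    (ζ : EuclideanSpace ℝ (Fin d)) (hζ0 : ζ ≠ 0) (hζL : ‖ζ‖ ≤ L)
    (hζ : ∀ y, g x + ⟪ζ, y - x⟫_ℝ - ρ / 2 * ‖y - x‖ ^ 2 ≤ g y)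
    -- `xp` is the projection onto `X` of the normalized subgradient step
    (xp : EuclideanSpace ℝ (Fin d)) (hxpX : xp ∈ X)
    (hxp : ∀ y ∈ X, dist (x - (α / ‖ζ‖) • ζ) xp ≤ dist (x - (α / ‖ζ‖) • ζ) y)
    -- the threshold `E*` and the contraction factor `q`
    (Estar : ℝ) (hEstar : Estar = (α * L / (μ + Real.sqrt (μ ^ 2 - α * ρ * L))) ^ 2)
    (q : ℝ)
    (hq : q = 1 + (α / L) * (ρ - 2 * μ /
      (Real.sqrt (Metric.infDist x Xstar ^ 2) + Real.sqrt Estar))) :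
    q < 1 ∧ Metric.infDist xp Xstar ^ 2 - Estar ≤ q * (Metric.infDist x Xstar ^ 2 - Estar) := by
  have hL : 0 < L := lt_of_lt_of_le hμ hμL
  have hζn : 0 < ‖ζ‖ := norm_pos_iff.mpr hζ0
  set s : ℝ := Metric.infDist x Xstar with hs
  have hs0 : 0 ≤ s := Metric.infDist_nonneg
  have hρs : ρ * s < μ := by
    rw [lt_div_iff₀ hρ] at hxtube
    linarith [hxtube]
  -- discriminant
  have hD2 : 0 < μ ^ 2 - α * ρ * L := by
    have h1 : (μ / L) * (μ / ρ) = μ ^ 2 / (L * ρ) := by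
      field_simp
    rw [h1, lt_div_iff₀ (by positivity)] at hα'
    linarith [hα']
  set D : ℝ := Real.sqrt (μ ^ 2 - α * ρ * L) with hD
  have hD0 : 0 < D := Real.sqrt_pos.mpr hD2
  have hDsq : D ^ 2 = μ ^ 2 - α * ρ * L := Real.sq_sqrt hD2.le
  have hDμ : D < μ := by
    have h0 : D < Real.sqrt (μ ^ 2) :=
      Real.sqrt_lt_sqrt hD2.le (by linarith [mul_pos hα (mul_pos hρ hL)])
    rwa [Real.sqrt_sq hμ.le] at h0
  have hμD : 0 < μ + D := by linarith
  set sstar : ℝ := α * L / (μ + D) with hsstar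
  have hsstar0 : 0 < sstar := by positivity
  have h1 : sstar * (μ + D) = α * L := by
    rw [hsstar, div_mul_cancel₀ _ hμD.ne']
  have h2 : (μ - D) * (μ + D) = α * ρ * L := by
    linear_combination -hDsq
  have h3 : sstar * ρ = μ - D := by
    apply mul_left_cancel₀ hμD.ne'
    linear_combination ρ * h1 - h2
  have hfix : ρ * sstar ^ 2 - 2 * μ * sstar + α * L = 0 := by
    linear_combination sstar * h3 - h1
  have hsstarμρ : ρ * sstar < μ := by
    have : sstar * ρ < μ := by linarith [h3, hD0]
    linarith [this, mul_comm sstar ρ]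
  have hEstar' : Estar = sstar ^ 2 := hEstar
  -- rewrite q
  have hq' : q = 1 + (α / L) * (ρ - 2 * μ / (s + sstar)) := by
    rw [hq, hEstar', Real.sqrt_sq hs0, Real.sqrt_sq hsstar0.le]
  have hsum : 0 < s + sstar := by linarith
  constructor
  · rw [hq']
    have h5 : ρ < 2 * μ / (s + sstar) := by
      rw [lt_div_iff₀ hsum]
      have he : ρ * (s + sstar) = ρ * s + ρ * sstar := by ring
      rw [he]; linarith
    have h6 : (0:ℝ) < α / L := by positivity
    have h7 : (α / L) * (ρ - 2 * μ / (s + sstar)) < 0 :=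
      mul_neg_of_pos_of_neg h6 (by linarith)
    linarith
  -- main inequality
  set c : ℝ := α / ‖ζ‖ with hc
  have hc0 : 0 < c := by positivity
  set u : EuclideanSpace ℝ (Fin d) := x - c • ζ with hu
  -- variational inequality for the projection
  haveI : Nonempty X := ⟨⟨xp, hxpX⟩⟩
  have hinf : ‖u - xp‖ = ⨅ w : X, ‖u - w‖ := by
    refine le_antisymm (le_ciInf fun w => ?_) (ciInf_le ⟨0, ?_⟩ (⟨xp, hxpX⟩ : X))
    · have h := hxp w w.2
      rwa [dist_eq_norm, dist_eq_norm] at h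
    · rintro y ⟨w, rfl⟩
      exact norm_nonneg _
  have hVI : ∀ w ∈ X, ⟪u - xp, w - xp⟫_ℝ ≤ 0 :=
    (norm_eq_iInf_iff_real_inner_le_zero hXcv hxpX).mp hinf
  -- step A : E⁺ ≤ (1+cρ)s² - 2cμs + α²
  have hEp0 : 0 ≤ Metric.infDist xp Xstar := Metric.infDist_nonneg
  have hA : Metric.infDist xp Xstar ^ 2 ≤ (1 + c * ρ) * s ^ 2 - 2 * c * μ * s + α ^ 2 := by
    apply eps_limit (C := (1 + c * ρ) * (2 * s + 1)) (by positivity)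
    intro ε hε hε1
    obtain ⟨xb, hxbmem, hxbd⟩ := (Metric.infDist_lt_iff hXstarNe).mp
      (show s < s + ε by linarith)
    have hxbX : xb ∈ X := by rw [hXstar] at hxbmem; exact hxbmem.1
    have hgxb : g xb = gstar := hgstar xb hxbmem
    set t : ℝ := ‖x - xb‖ with ht
    have htd : t = dist x xb := (dist_eq_norm x xb).symm
    have ht0 : 0 ≤ t := norm_nonneg _
    have htse : t < s + ε := by rw [htd]; exact hxbd
    -- subgradient + sharpness
    have hsub : μ * s - ρ / 2 * t ^ 2 ≤ ⟪ζ, x - xb⟫_ℝ := by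
      have h7 := hζ xb
      rw [hgxb] at h7
      have h8 := hsharp x hxX
      rw [← hs] at h8
      have h9 : ⟪ζ, xb - x⟫_ℝ = - ⟪ζ, x - xb⟫_ℝ := by
        rw [← inner_neg_right]; congr 1; abel
      have h10 : ‖xb - x‖ = t := by rw [ht, norm_sub_rev]
      rw [h9, h10] at h7
      linarith
    -- expand ‖u - xb‖²
    have hexp : ‖u - xb‖ ^ 2 = t ^ 2 - 2 * c * ⟪ζ, x - xb⟫_ℝ + α ^ 2 := by
      have e0 : u - xb = (x - xb) - c • ζ := by rw [hu]; abel
      have e1 : ⟪x - xb, c • ζ⟫_ℝ = c * ⟪ζ, x - xb⟫_ℝ := by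
        rw [real_inner_smul_right, real_inner_comm]
      have e2 : ‖c • ζ‖ = α := by
        rw [norm_smul, Real.norm_eq_abs, abs_of_pos hc0, hc]
        field_simp
      rw [e0, norm_sub_sq_real, e1, e2, ht]
      ring
    -- projection is nonexpansive towards xb
    have hproj : ‖xp - xb‖ ^ 2 ≤ ‖u - xb‖ ^ 2 := by
      have h11 := hVI xb hxbX
      have h12 : u - xb = (u - xp) - (xb - xp) := by abel
      have h13 : ‖(u - xp) - (xb - xp)‖ ^ 2
          = ‖u - xp‖ ^ 2 - 2 * ⟪u - xp, xb - xp⟫_ℝ + ‖xb - xp‖ ^ 2 :=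
        norm_sub_sq_real _ _
      have h14 : ‖xp - xb‖ = ‖xb - xp‖ := norm_sub_rev _ _
      rw [h12, h13, h14]
      linarith [sq_nonneg ‖u - xp‖]
    have hEd : Metric.infDist xp Xstar ^ 2 ≤ ‖xp - xb‖ ^ 2 := by
      have h15 : Metric.infDist xp Xstar ≤ dist xp xb := Metric.infDist_le_dist_of_mem hxbmem
      rw [dist_eq_norm] at h15
      exact pow_le_pow_left₀ hEp0 h15 2
    -- combine
    have h16 : c * (μ * s - ρ / 2 * t ^ 2) ≤ c * ⟪ζ, x - xb⟫_ℝ :=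
      mul_le_mul_of_nonneg_left hsub hc0.le
    have hcomb : Metric.infDist xp Xstar ^ 2 ≤ (1 + c * ρ) * t ^ 2 - 2 * c * μ * s + α ^ 2 := by
      have e3 : (1 + c * ρ) * t ^ 2 - 2 * c * μ * s + α ^ 2
          = t ^ 2 - 2 * (c * (μ * s - ρ / 2 * t ^ 2)) + α ^ 2 := by ring
      rw [e3]
      calc Metric.infDist xp Xstar ^ 2 ≤ ‖u - xb‖ ^ 2 := le_trans hEd hproj
        _ = t ^ 2 - 2 * c * ⟪ζ, x - xb⟫_ℝ + α ^ 2 := hexp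
        _ ≤ t ^ 2 - 2 * (c * (μ * s - ρ / 2 * t ^ 2)) + α ^ 2 := by linarith [h16]
    have ht2 : t ^ 2 ≤ s ^ 2 + (2 * s + 1) * ε := by
      have p1 : t * t ≤ (s + ε) * (s + ε) := mul_self_le_mul_self ht0 htse.le
      have p2 : ε * ε ≤ ε * 1 := mul_le_mul_of_nonneg_left hε1 hε.le
      have p3 : t ^ 2 = t * t := sq t
      have p4 : (s + ε) * (s + ε) = s ^ 2 + (2 * s + 1) * ε + (ε * ε - ε * 1) := by ring
      linarith [p1, p2]
    have h18 : (1 + c * ρ) * t ^ 2 ≤ (1 + c * ρ) * (s ^ 2 + (2 * s + 1) * ε) :=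
      mul_le_mul_of_nonneg_left ht2 (by positivity)
    have e4 : (1 + c * ρ) * (s ^ 2 + (2 * s + 1) * ε)
        = (1 + c * ρ) * s ^ 2 + (1 + c * ρ) * (2 * s + 1) * ε := by ring
    rw [e4] at h18
    linarith [hcomb, h18]
  -- step B : replace c by α/L
  have hcL : α / L ≤ c := div_le_div_of_nonneg_left hα.le hζn hζL
  have hneg : ρ * s ^ 2 - 2 * μ * s ≤ 0 := by
    have h19 : s * (ρ * s) ≤ s * μ := mul_le_mul_of_nonneg_left hρs.le hs0
    linarith [h19, mul_nonneg hμ.le hs0]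
  have hB : Metric.infDist xp Xstar ^ 2
      ≤ s ^ 2 + (α / L) * (ρ * s ^ 2 - 2 * μ * s) + α ^ 2 := by
    have h17 : c * (ρ * s ^ 2 - 2 * μ * s) ≤ (α / L) * (ρ * s ^ 2 - 2 * μ * s) :=
      mul_le_mul_of_nonpos_right hcL hneg
    linarith [hA, h17]
  -- final algebra
  have hqmul : q * (s ^ 2 - sstar ^ 2)
      = (s ^ 2 - sstar ^ 2) + (α / L) * (ρ * (s ^ 2 - sstar ^ 2) - 2 * μ * (s - sstar)) := by
    rw [hq']
    field_simp
    ring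
  have key2 : s ^ 2 + (α / L) * (ρ * s ^ 2 - 2 * μ * s) + α ^ 2 - sstar ^ 2
      = (s ^ 2 - sstar ^ 2) + (α / L) * (ρ * (s ^ 2 - sstar ^ 2) - 2 * μ * (s - sstar)) := by
    field_simp
    linear_combination α * hfix
  have key : s ^ 2 + (α / L) * (ρ * s ^ 2 - 2 * μ * s) + α ^ 2 - sstar ^ 2
      = q * (s ^ 2 - sstar ^ 2) := by rw [key2, hqmul]
  rw [hEstar']
  linarith [hB, key]
end

section
/- (Convergence of the fixed-stepsize subgradient method.) Suppose g is μ-sharp on 𝒳 with 𝒳* nonempty, fix L with 0 < μ ≤ L, set τ = μ/L, fix γ ∈ (0,1), and fix a stepsize α with 0 < α < (γτ/√(1 + 2τ²))·(μ/ρ). Suppose every weak subgradient of g at every point of the tube 𝒯₁ has norm at most L. Let x : ℕ → ℝ^d and ζ : ℕ → ℝ^d be sequences with x₀ ∈ 𝒯_γ, such that for every k the vector ζ_k is a weak subgradient of g at x_k and x_{k+1} = proj_𝒳( x_k − α·ζ_k/‖ζ_k‖ ), with the convention that x_{k+1} = x_k when ζ_k = 0. Write E_k = dist²(x_k, 𝒳*),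 define E* = ( αL/(μ + √(μ² − αρL)) )², D = √( max{E₀, 2α² + E*} ), and q = 1 + (α/L)·(ρ − μ/D). Then q ∈ (0,1), and for every k ≥ 0 one has √(E_k) ≤ D ≤ γμ/ρ and E_k − E* ≤ max{ q^k·(E₀ − E*), 2α² }. -/
set_option maxHeartbeats 2000000


open scoped InnerProductSpace

private lemma sq_le_aux {a b : ℝ} (ha : 0 ≤ a) (hb : 0 ≤ b) (h : a ^ 2 ≤ b ^ 2) : a ≤ b := by
  nlinarith

private lemma proj_contract {F : Type*} [NormedAddCommGroup F] [InnerProductSpace ℝ F]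
    {K : Set F} (hK : Convex ℝ K) {z p : F} (hp : p ∈ K)
    (hmin : ∀ y ∈ K, dist z p ≤ dist z y) {u : F} (hu : u ∈ K) : ‖u - p‖ ≤ ‖u - z‖ := by
  haveI : Nonempty K := ⟨⟨p, hp⟩⟩
  have hinf : ‖z - p‖ = ⨅ w : K, ‖z - w‖ := by
    apply le_antisymm
    · apply le_ciInf
      intro w
      have := hmin w w.2
      rwa [dist_eq_norm, dist_eq_norm] at this
    · exact ciInf_le (f := fun w : K => ‖z - w‖)
        ⟨0, by rintro _ ⟨w, rfl⟩; exact norm_nonneg _⟩ ⟨p, hp⟩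
  have h7 := (norm_eq_iInf_iff_real_inner_le_zero hK hp).1 hinf u hu
  have h8 : ‖u - z‖ ^ 2 = ‖u - p‖ ^ 2 - 2 * ⟪u - p, z - p⟫_ℝ + ‖z - p‖ ^ 2 := by
    rw [← norm_sub_sq_real]
    congr 1
    abel
  have h9 : ⟪u - p, z - p⟫_ℝ ≤ 0 := by rw [real_inner_comm]; exact h7
  have h10 : ‖u - p‖ ^ 2 ≤ ‖u - z‖ ^ 2 := by nlinarith [sq_nonneg ‖z - p‖]
  nlinarith [norm_nonneg (u - p), norm_nonneg (u - z), h10]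

/-- **Convergence of the fixed-stepsize subgradient method.**
If `g` is `μ`-sharp on `X` with nonempty solution set `Xstar`, `0 < μ ≤ L`, `τ = μ/L`,
`γ ∈ (0,1)`, `0 < α < (γτ/√(1 + 2τ²))·(μ/ρ)`, weak subgradients on the tube `𝒯₁` are bounded
by `L` in norm, and the iterates follow the constant-stepsize subgradient method started in
`𝒯_γ`, then, with `E_k = dist²(x_k, Xstar)`, `E* = (αL/(μ + √(μ² - αρL)))²`,
`D = √(max{E₀, 2α² + E*})` and `q = 1 + (α/L)(ρ - μ/D)`, we have `q ∈ (0,1)`, `D ≤ γμ/ρ`,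
and for all `k`: `√(E_k) ≤ D` and `E_k - E* ≤ max{q^k·(E₀ - E*), 2α²}`. -/
theorem fixed_stepsize_convergence
    {d : ℕ} (hd : 1 ≤ d)
    (g : EuclideanSpace ℝ (Fin d) → ℝ) (μ ρ L γ α : ℝ)
    (hμ : 0 < μ) (hρ : 0 < ρ) (hμL : μ ≤ L) (hγ : γ ∈ Set.Ioo (0 : ℝ) 1)
    (hα : 0 < α)
    (hα' : α < (γ * (μ / L) / Real.sqrt (1 + 2 * (μ / L) ^ 2)) * (μ / ρ))
    (X Xstar : Set (EuclideanSpace ℝ (Fin d)))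
    (hXne : X.Nonempty) (hXcl : IsClosed X) (hXcv : Convex ℝ X)
    (hXstar : Xstar = {x | x ∈ X ∧ ∀ y ∈ X, g x ≤ g y})
    (hXstarNe : Xstar.Nonempty)
    -- `gstar` is the minimal value of `g` over `X`
    (gstar : ℝ) (hgstar : ∀ z ∈ Xstar, g z = gstar)
    -- sharpness
    (hsharp : ∀ x ∈ X, μ * Metric.infDist x Xstar ≤ g x - gstar)
    -- every weak subgradient at every point of the tube `𝒯₁` has norm at most `L`
    (hbound : ∀ x ∈ X, Metric.infDist x Xstar < μ / ρ →
      ∀ v : EuclideanSpace ℝ (Fin d),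
        (∀ y, g x + ⟪v, y - x⟫_ℝ - ρ / 2 * ‖y - x‖ ^ 2 ≤ g y) → ‖v‖ ≤ L)
    -- the iterate and subgradient sequences
    (x ζ : ℕ → EuclideanSpace ℝ (Fin d))
    -- initialization in the tube `𝒯_γ`
    (hx0 : x 0 ∈ X) (hx0tube : Metric.infDist (x 0) Xstar < γ * μ / ρ)
    -- `ζ k` is a weak subgradient of `g` at `x k`
    (hζ : ∀ k, ∀ y, g (x k) + ⟪ζ k, y - x k⟫_ℝ - ρ / 2 * ‖y - x k‖ ^ 2 ≤ g y)
    -- constant-stepsize update: projection onto `X` of the normalized subgradient step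
    (hupdate : ∀ k, ζ k ≠ 0 →
      x (k + 1) ∈ X ∧
      ∀ y ∈ X, dist (x k - (α / ‖ζ k‖) • ζ k) (x (k + 1)) ≤
        dist (x k - (α / ‖ζ k‖) • ζ k) y)
    (hstop : ∀ k, ζ k = 0 → x (k + 1) = x k)
    -- the constants of the analysis
    (E : ℕ → ℝ) (hE : ∀ k, E k = Metric.infDist (x k) Xstar ^ 2)
    (Estar : ℝ) (hEstar : Estar = (α * L / (μ + Real.sqrt (μ ^ 2 - α * ρ * L))) ^ 2)
    (D : ℝ) (hD : D = Real.sqrt (max (E 0) (2 * α ^ 2 + Estar)))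
    (q : ℝ) (hq : q = 1 + (α / L) * (ρ - μ / D)) :
    (0 < q ∧ q < 1) ∧ D ≤ γ * μ / ρ ∧
      ∀ k : ℕ, Real.sqrt (E k) ≤ D ∧
        E k - Estar ≤ max (q ^ k * (E 0 - Estar)) (2 * α ^ 2) := by
  obtain ⟨hγ0, hγ1⟩ := hγ
  have hL : 0 < L := lt_of_lt_of_le hμ hμL
  obtain ⟨S, hSdef⟩ : ∃ S : ℝ, S = Real.sqrt (1 + 2 * (μ / L) ^ 2) := ⟨_, rfl⟩
  rw [← hSdef] at hα'
  have hS : 0 < S := hSdef ▸ Real.sqrt_pos.2 (by positivity)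
  have hS2 : S ^ 2 = 1 + 2 * (μ / L) ^ 2 := hSdef ▸ Real.sq_sqrt (by positivity)
  have hS1 : (1 : ℝ) ≤ S := by nlinarith [hS2, hS, sq_nonneg (μ / L), sq_nonneg (S - 1)]
  have hLS : L ^ 2 * S ^ 2 = L ^ 2 + 2 * μ ^ 2 := by
    rw [hS2]; field_simp
  have A1 : α * (ρ * L * S) < γ * μ ^ 2 := by
    calc α * (ρ * L * S) < (γ * (μ / L) / S) * (μ / ρ) * (ρ * L * S) :=
          mul_lt_mul_of_pos_right hα' (mul_pos (mul_pos hρ hL) hS)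
      _ = γ * μ ^ 2 := by field_simp
  have A2 : α ^ 2 * ρ ^ 2 * (L ^ 2 + 2 * μ ^ 2) < γ ^ 2 * μ ^ 4 := by
    have h2 : (α * (ρ * L * S)) ^ 2 < (γ * μ ^ 2) ^ 2 :=
      pow_lt_pow_left₀ A1 (mul_pos hα (mul_pos (mul_pos hρ hL) hS)).le two_ne_zero
    calc α ^ 2 * ρ ^ 2 * (L ^ 2 + 2 * μ ^ 2) = α ^ 2 * ρ ^ 2 * (L ^ 2 * S ^ 2) := by rw [hLS]
      _ = (α * (ρ * L * S)) ^ 2 := by ring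
      _ < (γ * μ ^ 2) ^ 2 := h2
      _ = γ ^ 2 * μ ^ 4 := by ring
  have hβ : 0 < μ ^ 2 - α * ρ * L := by
    have h1 : α * ρ * L ≤ α * (ρ * L * S) := by
      nlinarith [mul_nonneg (mul_nonneg (mul_nonneg hα.le hρ.le) hL.le) (sub_nonneg.2 hS1)]
    nlinarith [A1, mul_pos hμ hμ, hγ1]
  obtain ⟨sβ, hsβdef⟩ : ∃ sβ : ℝ, sβ = Real.sqrt (μ ^ 2 - α * ρ * L) := ⟨_, rfl⟩
  have hsβ0 : 0 ≤ sβ := hsβdef ▸ Real.sqrt_nonneg _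
  have hsβ2 : sβ ^ 2 = μ ^ 2 - α * ρ * L := hsβdef ▸ Real.sq_sqrt hβ.le
  have hμsβ : 0 < μ + sβ := by linarith
  obtain ⟨s, hsdef⟩ : ∃ s : ℝ, s = α * L / (μ + sβ) := ⟨_, rfl⟩
  have hs0 : 0 < s := hsdef ▸ div_pos (mul_pos hα hL) hμsβ
  have hsmul : s * (μ + sβ) = α * L := by
    rw [hsdef]; field_simp
  have hsρ : ρ * s = μ - sβ := by
    rw [hsdef, mul_div_assoc']
    rw [div_eq_iff hμsβ.ne']
    linear_combination hsβ2
  have QI : ρ * s ^ 2 - 2 * μ * s + α * L = 0 := by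
    linear_combination s * hsρ - hsmul
  have hEs : Estar = s ^ 2 := by rw [hEstar, hsdef, hsβdef]
  have hEspos : 0 < Estar := by rw [hEs]; exact pow_pos hs0 2
  have hE0 : 0 ≤ E 0 := (hE 0) ▸ sq_nonneg _
  have hDsq : D ^ 2 = max (E 0) (2 * α ^ 2 + Estar) := by
    rw [hD]; exact Real.sq_sqrt (le_max_of_le_right (by linarith only [hEspos, sq_nonneg α]))
  have hD0 : 0 < D := by
    rw [hD]; exact Real.sqrt_pos.2 (lt_max_of_lt_right (by linarith only [hEspos, sq_nonneg α]))
  have hDge : 2 * α ^ 2 + Estar ≤ D ^ 2 := hDsq ▸ le_max_right _ _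
  have hE0D : E 0 ≤ D ^ 2 := hDsq ▸ le_max_left _ _
  have hsD : s ≤ D := by
    apply sq_le_aux hs0.le hD0.le; rw [← hEs]; linarith only [hDge, sq_nonneg α]
  -- D ≤ γμ/ρ
  have hmax1 : E 0 ≤ (γ * μ / ρ) ^ 2 := by
    rw [hE 0]
    exact pow_le_pow_left₀ Metric.infDist_nonneg hx0tube.le 2
  have hsμ : s * μ ≤ α * L := by linarith only [hsmul, mul_nonneg hs0.le hsβ0]
  have h1' : Estar * μ ^ 2 ≤ α ^ 2 * L ^ 2 := by
    rw [hEs]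
    have := mul_self_le_mul_self (mul_nonneg hs0.le hμ.le) hsμ
    linarith only [this]
  have hmax2 : 2 * α ^ 2 + Estar ≤ (γ * μ / ρ) ^ 2 := by
    rw [div_pow, le_div_iff₀ (pow_pos hρ 2)]
    have h4 : (2 * α ^ 2 + Estar) * ρ ^ 2 * μ ^ 2 ≤ (γ * μ) ^ 2 * μ ^ 2 := by
      linarith only [A2, mul_le_mul_of_nonneg_left h1' (sq_nonneg ρ)]
    exact le_of_mul_le_mul_right h4 (pow_pos hμ 2)
  have hDtube : D ≤ γ * μ / ρ := by
    rw [hD]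
    calc Real.sqrt (max (E 0) (2 * α ^ 2 + Estar)) ≤ Real.sqrt ((γ * μ / ρ) ^ 2) :=
          Real.sqrt_le_sqrt (max_le hmax1 hmax2)
      _ = γ * μ / ρ := Real.sqrt_sq (div_nonneg (mul_nonneg hγ0.le hμ.le) hρ.le)
  have hDμρ : D < μ / ρ := by
    refine lt_of_le_of_lt hDtube ?_
    rw [div_lt_div_iff₀ hρ hρ]
    have h19 : γ * μ < μ := by nlinarith only [hγ1, hμ]
    exact mul_lt_mul_of_pos_right h19 hρ
  -- q bounds
  have hαD' : α < D := by
    have h16 : α ^ 2 < D ^ 2 := by linarith only [hDge, hEspos, sq_nonneg α]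
    exact lt_of_pow_lt_pow_left₀ 2 hD0.le h16
  have hαD : α * μ < D * L := by
    have h17 := mul_le_mul_of_nonneg_left hμL hα.le
    have h18 := mul_lt_mul_of_pos_right hαD' hL
    linarith only [h17, h18]
  have hq0 : 0 < q := by
    rw [hq]
    have h5 : (α / L) * (μ / D) < 1 := by
      rw [div_mul_div_comm]; exact (div_lt_one (mul_pos hL hD0)).2 (by linarith only [hαD])
    have h6 : 0 ≤ (α / L) * ρ := mul_nonneg (div_nonneg hα.le hL.le) hρ.le
    have h7 : (α / L) * (ρ - μ / D) = (α / L) * ρ - (α / L) * (μ / D) := mul_sub _ _ _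
    linarith only [h5, h6, h7]
  have hq1 : q < 1 := by
    rw [hq]
    have h5 : ρ < μ / D := by rw [lt_div_iff₀ hD0]; have := (lt_div_iff₀ hρ).1 hDμρ; linarith only [this]
    linarith only [mul_pos (div_pos hα hL) (sub_pos.2 h5)]
  have hqLD : q * (L * D) = L * D + α * ρ * D - α * μ := by
    rw [hq]; field_simp; ring
  -- one-step inequality
  have SI : ∀ k, x k ∈ X → Metric.infDist (x k) Xstar ≤ D →
      L * E (k + 1) ≤ (L + α * ρ) * E k - 2 * α * μ * Metric.infDist (x k) Xstar + α ^ 2 * L := by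
    intro k hxk hek
    set e := Metric.infDist (x k) Xstar with he_def
    have he0 : 0 ≤ e := Metric.infDist_nonneg
    have heμρ : e < μ / ρ := lt_of_le_of_lt hek hDμρ
    have hEke : E k = e ^ 2 := hE k
    have heγ : e ≤ γ * μ / ρ := le_trans hek hDtube
    have heργ : e * ρ ≤ γ * μ := (le_div_iff₀ hρ).1 heγ
    by_cases hz : ζ k = 0
    · -- stationary case: e must be 0
      have hzero : e = 0 := by
        by_contra hne
        have he0' : 0 < e := lt_of_le_of_ne he0 (Ne.symm hne)
        set ε := min e (μ / (3 * ρ)) with hεdef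
        have hε : 0 < ε := lt_min he0' (div_pos hμ (by linarith only [hρ]))
        obtain ⟨u, huXs, hu⟩ := (Metric.infDist_lt_iff hXstarNe).1
          (show Metric.infDist (x k) Xstar < e + ε by rw [← he_def]; linarith only [hε])
        have hgu : g u = gstar := hgstar u huXs
        have h6 := hζ k u
        rw [hz, inner_zero_left, hgu] at h6
        have hsh := hsharp (x k) hxk
        have hnorm : ‖u - x k‖ = dist (x k) u := by rw [dist_eq_norm, norm_sub_rev]
        have ht : ‖u - x k‖ < e + ε := by rw [hnorm]; exact hu
        have hbig : μ * e ≤ ρ / 2 * (e + ε) ^ 2 := by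
          have hsq : ‖u - x k‖ ^ 2 ≤ (e + ε) ^ 2 :=
            pow_le_pow_left₀ (norm_nonneg _) ht.le 2
          have := mul_le_mul_of_nonneg_left hsq (by linarith only [hρ] : (0:ℝ) ≤ ρ / 2)
          linarith only [this, h6, hsh]
        have hεe : ε ≤ e := min_le_left _ _
        have hεμ : ε ≤ μ / (3 * ρ) := min_le_right _ _
        have l3 : ρ * ε ≤ μ / 3 := by
          have := (le_div_iff₀ (show (0:ℝ) < 3 * ρ by linarith only [hρ])).1 hεμ
          linarith only [this]
        have p1 := mul_le_mul_of_nonneg_left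
          (mul_le_mul_of_nonneg_right hεe hε.le) (hρ.le)
        have p2 := mul_le_mul_of_nonneg_right heργ he0'.le
        have p3 := mul_le_mul_of_nonneg_right l3 he0'.le
        have p4 : 0 < μ * e := mul_pos hμ he0'
        nlinarith only [hbig, p1, p2, p3, p4, hγ1]
      have hx1 : E (k + 1) = E k := by rw [hE, hE, hstop k hz]
      rw [hx1, hEke, hzero]
      linarith only [mul_nonneg (mul_nonneg hα.le hα.le) hL.le]
    · -- moving case
      have hnz : 0 < ‖ζ k‖ := norm_pos_iff.2 hz
      have hLb : ‖ζ k‖ ≤ L := hbound (x k) hxk heμρ (ζ k) (hζ k)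
      obtain ⟨hx1X, hmin⟩ := hupdate k hz
      set z := x k - (α / ‖ζ k‖) • ζ k with hzdef
      have hproj : ∀ u ∈ X, ‖u - x (k + 1)‖ ≤ ‖u - z‖ := fun u hu =>
        proj_contract hXcv hx1X hmin hu
      have hcζ : ‖(α / ‖ζ k‖) • ζ k‖ = α := by
        rw [norm_smul, Real.norm_eq_abs, abs_of_pos (div_pos hα hnz), div_mul_cancel₀ _ hnz.ne']
      by_cases he : e = 0
      · -- e = 0 : show E (k+1) ≤ α²
        have hE1 : E (k + 1) ≤ α ^ 2 := by
          have hs1 : Real.sqrt (E (k + 1)) ≤ α := by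
            apply le_of_forall_pos_le_add
            intro ε hε
            obtain ⟨u, huXs, hu⟩ := (Metric.infDist_lt_iff hXstarNe).1
              (show Metric.infDist (x k) Xstar < e + ε by rw [← he_def]; linarith only [hε])
            have huX' : u ∈ X := by
              have := hXstar ▸ huXs
              exact this.1
            have hle := hproj u huX'
            have hnz2 : ‖u - z‖ ≤ ‖u - x k‖ + α := by
              calc ‖u - z‖ = ‖(u - x k) + (α / ‖ζ k‖) • ζ k‖ := by rw [hzdef]; congr 1; abel
                _ ≤ ‖u - x k‖ + ‖(α / ‖ζ k‖) • ζ k‖ := norm_add_le _ _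
                _ = ‖u - x k‖ + α := by rw [hcζ]
            have hd1 : Metric.infDist (x (k + 1)) Xstar ≤ ‖u - x (k + 1)‖ := by
              rw [show ‖u - x (k + 1)‖ = dist (x (k + 1)) u by rw [dist_eq_norm, norm_sub_rev]]
              exact Metric.infDist_le_dist_of_mem huXs
            have hut : ‖u - x k‖ < ε := by
              rw [show ‖u - x k‖ = dist (x k) u by rw [dist_eq_norm, norm_sub_rev]]
              rw [he] at hu
              linarith
            rw [hE, Real.sqrt_sq Metric.infDist_nonneg]
            linarith only [hd1, hle, hnz2, hut]
          calc E (k + 1) = Real.sqrt (E (k + 1)) ^ 2 := by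
                rw [Real.sq_sqrt ((hE (k + 1)) ▸ sq_nonneg _)]
            _ ≤ α ^ 2 := pow_le_pow_left₀ (Real.sqrt_nonneg _) hs1 2
        rw [hEke, he]
        linarith only [mul_le_mul_of_nonneg_left hE1 hL.le]
      · -- e > 0
        have he0' : 0 < e := lt_of_le_of_ne he0 (Ne.symm he)
        apply le_of_forall_pos_le_add
        intro δ hδ
        have hden : 0 < (L + α * ρ) * (3 * e) :=
          mul_pos (by linarith only [hL, mul_pos hα hρ]) (by linarith only [he0'])
        set ε := min (min e (μ / (3 * ρ))) (δ / ((L + α * ρ) * (3 * e))) with hεdef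
        have hε : 0 < ε := lt_min (lt_min he0' (div_pos hμ (by linarith only [hρ]))) (div_pos hδ hden)
        have hεe : ε ≤ e := le_trans (min_le_left _ _) (min_le_left _ _)
        have hεμ : ε ≤ μ / (3 * ρ) := le_trans (min_le_left _ _) (min_le_right _ _)
        have hεδ : ε ≤ δ / ((L + α * ρ) * (3 * e)) := min_le_right _ _
        obtain ⟨u, huXs, hu⟩ := (Metric.infDist_lt_iff hXstarNe).1
          (show Metric.infDist (x k) Xstar < e + ε by rw [← he_def]; linarith only [hε])
        set t := dist (x k) u with ht_def
        have ht0 : 0 ≤ t := dist_nonneg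
        have het : e ≤ t := Metric.infDist_le_dist_of_mem huXs
        have ht : t < e + ε := hu
        have huX' : u ∈ X := by
          have := hXstar ▸ huXs
          exact this.1
        have hgu : g u = gstar := hgstar u huXs
        have hnormt : ‖u - x k‖ = t := by rw [ht_def, dist_eq_norm, norm_sub_rev]
        have hip : ⟪ζ k, u - x k⟫_ℝ ≤ gstar - g (x k) + ρ / 2 * t ^ 2 := by
          have h6 := hζ k u
          rw [hgu, hnormt] at h6
          linarith only [h6]
        have hsh := hsharp (x k) hxk
        have hW : ⟪ζ k, u - x k⟫_ℝ ≤ -(μ * e) + ρ / 2 * t ^ 2 := by linarith only [hip, hsh]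
        have l3 : ρ * ε ≤ μ / 3 := by
          have := (le_div_iff₀ (show (0:ℝ) < 3 * ρ by linarith only [hρ])).1 hεμ
          linarith only [this]
        have hWneg : -(μ * e) + ρ / 2 * t ^ 2 ≤ 0 := by
          have q0 : t ^ 2 ≤ (e + ε) ^ 2 := pow_le_pow_left₀ ht0 ht.le 2
          have p1 := mul_le_mul_of_nonneg_left
            (mul_le_mul_of_nonneg_right hεe hε.le) (hρ.le)
          have p2 := mul_le_mul_of_nonneg_right heργ he0'.le
          have p3 := mul_le_mul_of_nonneg_right l3 he0'.le
          have p4 : 0 ≤ μ * e := mul_nonneg hμ.le he0'.le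
          nlinarith only [q0, p1, p2, p3, p4, hγ1.le, hμ, hρ]
        have hexp : ‖u - z‖ ^ 2 = t ^ 2 + 2 * ((α / ‖ζ k‖) * ⟪ζ k, u - x k⟫_ℝ) + α ^ 2 := by
          have h10 : u - z = (u - x k) + (α / ‖ζ k‖) • ζ k := by rw [hzdef]; abel
          rw [h10, norm_add_sq_real, hnormt, hcζ, real_inner_smul_right, real_inner_comm]
        have hcoef : α ≤ L * (α / ‖ζ k‖) := by
          rw [mul_div_assoc', le_div_iff₀ hnz]
          linarith only [mul_le_mul_of_nonneg_left hLb hα.le]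
        have hdiv2 : L * ((α / ‖ζ k‖) * ⟪ζ k, u - x k⟫_ℝ) ≤ α * (-(μ * e) + ρ / 2 * t ^ 2) := by
          have h11 : (α / ‖ζ k‖) * ⟪ζ k, u - x k⟫_ℝ ≤ (α / ‖ζ k‖) * (-(μ * e) + ρ / 2 * t ^ 2) :=
            mul_le_mul_of_nonneg_left hW (div_nonneg hα.le (norm_nonneg _))
          have h12 : (L * (α / ‖ζ k‖)) * (-(μ * e) + ρ / 2 * t ^ 2) ≤
              α * (-(μ * e) + ρ / 2 * t ^ 2) := mul_le_mul_of_nonpos_right hcoef hWneg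
          linarith only [mul_le_mul_of_nonneg_left h11 hL.le, h12]
        have hEnext : E (k + 1) ≤ ‖u - z‖ ^ 2 := by
          have hd1 : Metric.infDist (x (k + 1)) Xstar ≤ ‖u - x (k + 1)‖ := by
            rw [show ‖u - x (k + 1)‖ = dist (x (k + 1)) u by rw [dist_eq_norm, norm_sub_rev]]
            exact Metric.infDist_le_dist_of_mem huXs
          have h13 := hproj u huX'
          rw [hE]
          calc Metric.infDist (x (k + 1)) Xstar ^ 2 ≤ ‖u - x (k + 1)‖ ^ 2 :=
                pow_le_pow_left₀ Metric.infDist_nonneg hd1 2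
            _ ≤ ‖u - z‖ ^ 2 := pow_le_pow_left₀ (norm_nonneg _) h13 2
        have final' : L * E (k + 1) ≤
            L * t ^ 2 + 2 * (α * (-(μ * e) + ρ / 2 * t ^ 2)) + α ^ 2 * L := by
          have h13 := mul_le_mul_of_nonneg_left hEnext hL.le
          rw [hexp] at h13
          linarith only [h13, hdiv2]
        have ht2 : t ^ 2 ≤ e ^ 2 + 3 * e * ε := by
          have q0 : t ^ 2 ≤ (e + ε) ^ 2 := pow_le_pow_left₀ ht0 ht.le 2
          have q1 := mul_le_mul_of_nonneg_right hεe hε.le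
          linarith only [q0, q1]
        have hεδ' : ε * ((L + α * ρ) * (3 * e)) ≤ δ := (le_div_iff₀ hden).1 hεδ
        rw [hEke]
        linarith only [final', mul_le_mul_of_nonneg_left ht2
          (by linarith only [hL, mul_pos hα hρ] : (0:ℝ) ≤ L + α * ρ), hεδ']
  -- the main induction
  have main : ∀ k, x k ∈ X ∧ Metric.infDist (x k) Xstar ≤ D ∧
      E k - Estar ≤ max (q ^ k * (E 0 - Estar)) (2 * α ^ 2) := by
    intro k
    induction k with
    | zero =>
      refine ⟨hx0, ?_, ?_⟩
      · have h14 : Metric.infDist (x 0) Xstar = Real.sqrt (E 0) := by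
          rw [hE, Real.sqrt_sq Metric.infDist_nonneg]
        rw [h14, hD]
        exact Real.sqrt_le_sqrt (le_max_left _ _)
      · rw [pow_zero, one_mul]
        exact le_max_left _ _
    | succ k ih =>
      obtain ⟨hxk, hek, hEk⟩ := ih
      have hxk1 : x (k + 1) ∈ X := by
        by_cases hzz : ζ k = 0
        · rw [hstop k hzz]; exact hxk
        · exact (hupdate k hzz).1
      have hsi := SI k hxk hek
      set e := Metric.infDist (x k) Xstar with he_def
      have hEke : E k = e ^ 2 := hE k
      rw [hEke] at hsi
      have he0 : 0 ≤ e := Metric.infDist_nonneg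
      by_cases hcase : s ≤ e
      · -- contraction case
        have h2D : e + s ≤ 2 * D := by linarith only [hek, hsD]
        have hBaD : α * D * (ρ * s ^ 2 - 2 * μ * s + α * L) = 0 := by rw [QI]; ring
        have key : 0 ≤ α * μ * ((e - s) * (2 * D - e - s)) := by
          apply mul_nonneg (mul_nonneg hα.le hμ.le)
          exact mul_nonneg (by linarith only [hcase]) (by linarith only [h2D])
        have goal' : L * D * (E (k + 1) - Estar) ≤ (L * D + α * ρ * D - α * μ) * (E k - Estar) := by
          have A := mul_le_mul_of_nonneg_left hsi hD0.le
          rw [hEs, hEke]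
          linarith only [A, hBaD, key]
        have contr : E (k + 1) - Estar ≤ q * (E k - Estar) := by
          have hLD : 0 < L * D := mul_pos hL hD0
          have h14 : L * D * (E (k + 1) - Estar) ≤ L * D * (q * (E k - Estar)) := by
            have hr : (L * D + α * ρ * D - α * μ) * (E k - Estar) =
                L * D * (q * (E k - Estar)) := by rw [← hqLD]; ring
            linarith only [goal', hr.le, hr.ge]
          exact le_of_mul_le_mul_left h14 hLD
        have hEgeEs : Estar ≤ E k := by rw [hEs, hEke]; exact pow_le_pow_left₀ hs0.le hcase 2
        have hmono : E (k + 1) ≤ E k := by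
          have := mul_nonneg (sub_nonneg.2 hq1.le) (sub_nonneg.2 hEgeEs)
          linarith only [contr, this]
        have hdist : Metric.infDist (x (k + 1)) Xstar ≤ D := by
          apply sq_le_aux Metric.infDist_nonneg hD0.le
          calc Metric.infDist (x (k + 1)) Xstar ^ 2 = E (k + 1) := (hE _).symm
            _ ≤ E k := hmono
            _ = e ^ 2 := hEke
            _ ≤ D ^ 2 := pow_le_pow_left₀ he0 hek 2
        refine ⟨hxk1, hdist, ?_⟩
        calc E (k + 1) - Estar ≤ q * (E k - Estar) := contr
          _ ≤ q * max (q ^ k * (E 0 - Estar)) (2 * α ^ 2) :=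
              mul_le_mul_of_nonneg_left hEk hq0.le
          _ ≤ max (q ^ (k + 1) * (E 0 - Estar)) (2 * α ^ 2) := by
              rcases le_total (q ^ k * (E 0 - Estar)) (2 * α ^ 2) with h | h
              · rw [max_eq_right h]
                apply le_max_of_le_right
                linarith only [mul_nonneg (sub_nonneg.2 hq1.le) (sq_nonneg α)]
              · rw [max_eq_left h]
                apply le_max_of_le_left
                have h15 : q * (q ^ k * (E 0 - Estar)) = q ^ (k + 1) * (E 0 - Estar) := by
                  rw [pow_succ]; ring
                linarith only [h15.le]
      · -- small case : e < s
        push_neg at hcase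
        have hρe : ρ * e ≤ μ := by
          have := mul_le_mul_of_nonneg_left hcase.le hρ.le
          linarith only [this, hsρ, hsβ0]
        have hsmall : E (k + 1) ≤ e ^ 2 + α ^ 2 := by
          have h20 : L * E (k + 1) ≤ L * (e ^ 2 + α ^ 2) := by
            have q1 := mul_nonneg hα.le (mul_nonneg he0 (sub_nonneg.2 hρe))
            have q2 := mul_nonneg (mul_nonneg hα.le hμ.le) he0
            nlinarith only [hsi, q1, q2]
          exact le_of_mul_le_mul_left h20 hL
        have hdist : Metric.infDist (x (k + 1)) Xstar ≤ D := by
          apply sq_le_aux Metric.infDist_nonneg hD0.le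
          have : Metric.infDist (x (k + 1)) Xstar ^ 2 = E (k + 1) := (hE _).symm
          rw [this]
          have q3 : e ^ 2 ≤ s ^ 2 := pow_le_pow_left₀ he0 hcase.le 2
          linarith only [hsmall, q3, hDge, hEs.le, hEs.ge, sq_nonneg α]
        refine ⟨hxk1, hdist, ?_⟩
        apply le_max_of_le_right
        rw [hEs]
        have q3 : e ^ 2 ≤ s ^ 2 := pow_le_pow_left₀ he0 hcase.le 2
        linarith only [hsmall, q3, sq_nonneg α]
  refine ⟨⟨hq0, hq1⟩, hDtube, fun k => ?_⟩
  obtain ⟨-, hdist, hrec⟩ := main k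
  constructor
  · rw [hE, Real.sqrt_sq Metric.infDist_nonneg]
    exact hdist
  · exact hrec
end

section
/- (Bounds on the constants in the fixed-stepsize analysis.) Let μ, ρ, L be positive reals with μ ≤ L, set τ = μ/L, fix γ ∈ (0,1), fix α with 0 < α < (γτ/√(1 + 2τ²))·(μ/ρ), and let E₀ ≥ 0 satisfy E₀ ≤ (γμ/ρ)². Define E* = ( αL/(μ + √(μ² − αρL)) )², D = √( max{E₀, 2α² + E*} ), and q = 1 + (α/L)·(ρ − μ/D). Then E* is well defined (μ² − αρL > 0), D ≤ γμ/ρ, and q ∈ (0,1). -/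
private lemma fixed_aux
    (μ ρ L γ α : ℝ)
    (hμ : 0 < μ) (hρ : 0 < ρ) (hL : 0 < L) (hμL : μ ≤ L)
    (hγ0 : 0 < γ) (hγ1 : γ < 1)
    (hα : 0 < α)
    (hα' : α < (γ * (μ / L) / Real.sqrt (1 + 2 * (μ / L) ^ 2)) * (μ / ρ))
    (Estar : ℝ) (hEstar : Estar = (α * L / (μ + Real.sqrt (μ ^ 2 - α * ρ * L))) ^ 2) :
    0 < μ ^ 2 - α * ρ * L ∧ 0 ≤ Estar ∧ 2 * α ^ 2 + Estar ≤ (γ * μ / ρ) ^ 2 := by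
  set s := Real.sqrt (1 + 2 * (μ / L) ^ 2) with hs
  clear_value s
  have hs0 : 0 < s := by rw [hs]; exact Real.sqrt_pos.mpr (by positivity)
  have hs2 : s ^ 2 = 1 + 2 * (μ / L) ^ 2 := by
    rw [hs]; exact Real.sq_sqrt (by positivity)
  have hs1 : 1 ≤ s := by nlinarith [hs0, hs2, sq_nonneg (μ / L)]
  have key : α * (L * s * ρ) < γ * μ * μ := by
    have h := hα'
    rw [show γ * (μ / L) / s * (μ / ρ) = γ * μ * μ / (L * s * ρ) by
      field_simp] at h
    exact (lt_div_iff₀ (by positivity)).mp h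
  have h1 : 0 < μ ^ 2 - α * ρ * L := by nlinarith [key, hs1, mul_pos hα (mul_pos hL hρ)]
  set w := Real.sqrt (μ ^ 2 - α * ρ * L) with hw
  clear_value w
  have hw0 : 0 ≤ w := by rw [hw]; exact Real.sqrt_nonneg _
  have hden : 0 < μ + w := by linarith
  have hEpos : 0 ≤ Estar := by rw [hEstar]; positivity
  have hEb2 : Estar * μ ^ 2 ≤ α ^ 2 * L ^ 2 := by
    have hEeq : Estar * (μ + w) ^ 2 = α ^ 2 * L ^ 2 := by
      rw [hEstar, div_pow, div_mul_cancel₀]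
      · ring
      · positivity
    nlinarith [hEeq, mul_nonneg hEpos (mul_nonneg hw0 hw0),
      mul_nonneg (mul_nonneg hEpos hμ.le) hw0]
  have hkey3 : α ^ 2 * ρ ^ 2 * (L ^ 2 + 2 * μ ^ 2) < γ ^ 2 * μ ^ 4 := by
    have hpos : (0:ℝ) ≤ α * (L * s * ρ) := by positivity
    have hksq : (α * (L * s * ρ)) ^ 2 < (γ * μ * μ) ^ 2 :=
      pow_lt_pow_left₀ key hpos (by norm_num)
    have hL2 : L ^ 2 * s ^ 2 = L ^ 2 + 2 * μ ^ 2 := by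
      rw [hs2]; field_simp
    have hexp : α ^ 2 * ρ ^ 2 * (L ^ 2 + 2 * μ ^ 2) = (α * (L * s * ρ)) ^ 2 := by
      rw [← hL2]; ring
    rw [hexp]
    calc (α * (L * s * ρ)) ^ 2 < (γ * μ * μ) ^ 2 := hksq
      _ = γ ^ 2 * μ ^ 4 := by ring
  refine ⟨h1, hEpos, ?_⟩
  rw [div_pow, le_div_iff₀ (by positivity : (0:ℝ) < ρ ^ 2)]
  have hEb2r : Estar * μ ^ 2 * ρ ^ 2 ≤ α ^ 2 * L ^ 2 * ρ ^ 2 :=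
    mul_le_mul_of_nonneg_right hEb2 (sq_nonneg ρ)
  have h5 : (2 * α ^ 2 + Estar) * ρ ^ 2 * μ ^ 2 < (γ * μ) ^ 2 * μ ^ 2 := by
    calc (2 * α ^ 2 + Estar) * ρ ^ 2 * μ ^ 2
        = 2 * (α ^ 2 * ρ ^ 2 * μ ^ 2) + Estar * μ ^ 2 * ρ ^ 2 := by ring
      _ ≤ 2 * (α ^ 2 * ρ ^ 2 * μ ^ 2) + α ^ 2 * L ^ 2 * ρ ^ 2 := by linarith
      _ = α ^ 2 * ρ ^ 2 * (L ^ 2 + 2 * μ ^ 2) := by ring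
      _ < γ ^ 2 * μ ^ 4 := hkey3
      _ = (γ * μ) ^ 2 * μ ^ 2 := by ring
  exact le_of_lt (lt_of_mul_lt_mul_right h5 (sq_nonneg μ))

/-- **Bounds on the constants in the fixed-stepsize analysis.**
Let `0 < μ ≤ L`, `ρ > 0`, `τ = μ/L`, `γ ∈ (0,1)`, `0 < α < (γτ/√(1 + 2τ²))·(μ/ρ)`, and
`0 ≤ E₀ ≤ (γμ/ρ)²`. With `E* = (αL/(μ + √(μ² - αρL)))²`, `D = √(max{E₀, 2α² + E*})` and
`q = 1 + (α/L)(ρ - μ/D)`, we have `μ² - αρL > 0`, `D ≤ γμ/ρ`, and `q ∈ (0,1)`. -/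
theorem fixed_stepsize_constants_bounds
    (μ ρ L γ α E₀ : ℝ)
    (hμ : 0 < μ) (hρ : 0 < ρ) (hL : 0 < L) (hμL : μ ≤ L)
    (hγ : γ ∈ Set.Ioo (0 : ℝ) 1)
    (hα : 0 < α)
    (hα' : α < (γ * (μ / L) / Real.sqrt (1 + 2 * (μ / L) ^ 2)) * (μ / ρ))
    (hE₀ : 0 ≤ E₀) (hE₀' : E₀ ≤ (γ * μ / ρ) ^ 2)
    (Estar : ℝ) (hEstar : Estar = (α * L / (μ + Real.sqrt (μ ^ 2 - α * ρ * L))) ^ 2)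
    (D : ℝ) (hD : D = Real.sqrt (max E₀ (2 * α ^ 2 + Estar)))
    (q : ℝ) (hq : q = 1 + (α / L) * (ρ - μ / D)) :
    0 < μ ^ 2 - α * ρ * L ∧ D ≤ γ * μ / ρ ∧ 0 < q ∧ q < 1 := by
  obtain ⟨hγ0, hγ1⟩ := hγ
  obtain ⟨h1, hEpos, hbound⟩ := fixed_aux μ ρ L γ α hμ hρ hL hμL hγ0 hγ1 hα hα' Estar hEstar
  have hmax0 : 0 ≤ max E₀ (2 * α ^ 2 + Estar) := le_trans hE₀ (le_max_left _ _)
  have hDsq : D ^ 2 = max E₀ (2 * α ^ 2 + Estar) := by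
    rw [hD]; exact Real.sq_sqrt hmax0
  have hD0' : 0 ≤ D := by rw [hD]; exact Real.sqrt_nonneg _
  have hDle : D ≤ γ * μ / ρ := by
    have hm : max E₀ (2 * α ^ 2 + Estar) ≤ (γ * μ / ρ) ^ 2 := max_le hE₀' hbound
    rw [hD]
    calc Real.sqrt (max E₀ (2 * α ^ 2 + Estar)) ≤ Real.sqrt ((γ * μ / ρ) ^ 2) :=
          Real.sqrt_le_sqrt hm
      _ = γ * μ / ρ := Real.sqrt_sq (by positivity)
  have hD2 : 2 * α ^ 2 ≤ D ^ 2 := by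
    rw [hDsq]; exact le_trans (by linarith) (le_max_right _ _)
  have hαD : α < D := by
    have hα2 : 0 < α ^ 2 := by positivity
    have h6 : α ^ 2 < D ^ 2 := by linarith
    exact lt_of_pow_lt_pow_left₀ 2 hD0' h6
  have hD0 : 0 < D := lt_trans hα hαD
  -- q < 1
  have hρD : ρ * D < μ := by
    have h7 : ρ * D ≤ ρ * (γ * μ / ρ) := mul_le_mul_of_nonneg_left hDle hρ.le
    have h2 : ρ * (γ * μ / ρ) = γ * μ := by field_simp
    have h3 : γ * μ < μ := by nlinarith [hγ1, hμ]
    linarith [h2 ▸ h7]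
  have hρlt : ρ < μ / D := (lt_div_iff₀ hD0).mpr hρD
  have hq1 : q < 1 := by
    have hneg : (α / L) * (ρ - μ / D) < 0 :=
      mul_neg_of_pos_of_neg (by positivity) (by linarith)
    rw [hq]; linarith [hneg]
  -- q > 0
  have hμD : μ / D < L / α := by
    calc μ / D ≤ L / D := div_le_div_of_nonneg_right hμL hD0.le
      _ < L / α := div_lt_div_of_pos_left hL hα hαD
  have hlt1 : (α / L) * (μ / D) < 1 := by
    have h8 := mul_lt_mul_of_pos_left hμD (show (0:ℝ) < α / L by positivity)
    have heq : (α / L) * (L / α) = 1 := by field_simp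
    linarith [h8, heq.le]
  have hq0 : 0 < q := by
    have hqr : q = 1 + (α / L) * ρ - (α / L) * (μ / D) := by rw [hq]; ring
    have hpos : 0 < (α / L) * ρ := by positivity
    rw [hqr]; linarith [hlt1]
  exact ⟨h1, hDle, hq0, hq1⟩
end

section
/- (Overshooting case of the fixed-stepsize analysis.) Suppose g is μ-sharp on 𝒳 with 𝒳* nonempty, fix L with 0 < μ ≤ L, set τ = μ/L, and fix α with 0 < α < τ·μ/ρ. Define E* = ( αL/(μ + √(μ² − αρL)) )². Let x ∈ 𝒯₁ satisfy dist²(x, 𝒳*) < E*, let ζ ≠ 0 be a weak subgradient of g at x with ‖ζ‖ ≤ L, and set x⁺ = proj_𝒳( x − α·ζ/‖ζ‖ ). Then dist²(x⁺, 𝒳*) ≤ E* + 2α². -/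
open scoped InnerProductSpace

set_option maxHeartbeats 2000000 in
/-- **Overshooting case of the fixed-stepsize analysis.**
If `g` is `μ`-sharp on `X` with nonempty solution set `Xstar`, `0 < μ ≤ L`, `τ = μ/L`,
`0 < α < τμ/ρ`, `E* = (αL/(μ + √(μ² - αρL)))²`, `x ∈ 𝒯₁` satisfies `dist²(x, Xstar) < E*`,
`ζ ≠ 0` is a weak subgradient of `g` at `x` with `‖ζ‖ ≤ L`, and
`x⁺ = proj_X(x - α·ζ/‖ζ‖)`, then `dist²(x⁺, Xstar) ≤ E* + 2α²`. -/
theorem overshooting_case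
    {d : ℕ} (hd : 1 ≤ d)
    (g : EuclideanSpace ℝ (Fin d) → ℝ) (μ ρ L α : ℝ)
    (hμ : 0 < μ) (hρ : 0 < ρ) (hμL : μ ≤ L)
    (hα : 0 < α) (hα' : α < (μ / L) * (μ / ρ))
    (X Xstar : Set (EuclideanSpace ℝ (Fin d)))
    (hXne : X.Nonempty) (hXcl : IsClosed X) (hXcv : Convex ℝ X)
    (hXstar : Xstar = {x | x ∈ X ∧ ∀ y ∈ X, g x ≤ g y})
    (hXstarNe : Xstar.Nonempty)
    -- `gstar` is the minimal value of `g` over `X`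
    (gstar : ℝ) (hgstar : ∀ z ∈ Xstar, g z = gstar)
    -- sharpness
    (hsharp : ∀ x ∈ X, μ * Metric.infDist x Xstar ≤ g x - gstar)
    -- the threshold `E*`
    (Estar : ℝ) (hEstar : Estar = (α * L / (μ + Real.sqrt (μ ^ 2 - α * ρ * L))) ^ 2)
    -- `x` lies in the tube `𝒯₁` and below the threshold
    (x : EuclideanSpace ℝ (Fin d)) (hxX : x ∈ X)
    (hxtube : Metric.infDist x Xstar < μ / ρ)
    (hxE : Metric.infDist x Xstar ^ 2 < Estar)
    -- `ζ ≠ 0` is a weak subgradient of `g` at `x` with `‖ζ‖ ≤ L`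
    (ζ : EuclideanSpace ℝ (Fin d)) (hζ0 : ζ ≠ 0) (hζL : ‖ζ‖ ≤ L)
    (hζ : ∀ y, g x + ⟪ζ, y - x⟫_ℝ - ρ / 2 * ‖y - x‖ ^ 2 ≤ g y)
    -- `xp` is the projection onto `X` of the normalized subgradient step
    (xp : EuclideanSpace ℝ (Fin d)) (hxpX : xp ∈ X)
    (hxp : ∀ y ∈ X, dist (x - (α / ‖ζ‖) • ζ) xp ≤ dist (x - (α / ‖ζ‖) • ζ) y) :
    Metric.infDist xp Xstar ^ 2 ≤ Estar + 2 * α ^ 2 := by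
  have hXstarX : Xstar ⊆ X := by rw [hXstar]; exact fun z hz => hz.1
  set D := Metric.infDist x Xstar with hD
  clear_value D
  have hD0 : 0 ≤ D := by rw [hD]; exact Metric.infDist_nonneg
  have hζn : 0 < ‖ζ‖ := norm_pos_iff.mpr hζ0
  set z : EuclideanSpace ℝ (Fin d) := x - (α / ‖ζ‖) • ζ with hzdef
  clear_value z
  -- variational characterization of the projection
  have hproj : ∀ w ∈ X, ⟪z - xp, w - xp⟫_ℝ ≤ 0 := by
    have : ‖z - xp‖ = ⨅ w : X, ‖z - w‖ := by
      haveI : Nonempty X := ⟨⟨xp, hxpX⟩⟩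
      apply le_antisymm
      · apply le_ciInf
        intro w
        have := hxp w w.2
        simpa [dist_eq_norm] using this
      · have := ciInf_le (f := fun w : X => ‖z - w‖)
          ⟨0, fun _ ⟨_, h⟩ => h ▸ norm_nonneg _⟩ ⟨xp, hxpX⟩
        simpa using this
    exact (norm_eq_iInf_iff_real_inner_le_zero hXcv hxpX).mp this
  -- contraction: ‖xp - w‖ ≤ ‖z - w‖ for w ∈ X
  have hcontr : ∀ w ∈ X, ‖xp - w‖ ≤ ‖z - w‖ := by
    intro w hw
    have h1 : ⟪z - xp, w - xp⟫_ℝ ≤ 0 := hproj w hw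
    have hexp : ‖z - w‖ ^ 2 = ‖z - xp‖ ^ 2 - 2 * ⟪z - xp, w - xp⟫_ℝ + ‖xp - w‖ ^ 2 := by
      have h2 : z - w = (z - xp) - (w - xp) := by abel
      rw [h2, norm_sub_sq_real]
      have : ‖w - xp‖ = ‖xp - w‖ := norm_sub_rev _ _
      rw [this]
    have hsq : ‖xp - w‖ ^ 2 ≤ ‖z - w‖ ^ 2 := by nlinarith [sq_nonneg ‖z - xp‖]
    have := Real.sqrt_le_sqrt hsq
    rwa [Real.sqrt_sq (norm_nonneg _), Real.sqrt_sq (norm_nonneg _)] at this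
  -- key estimate for each δ > 0
  have key : ∀ δ : ℝ, 0 < δ →
      Metric.infDist xp Xstar ^ 2 ≤ (D + δ) ^ 2 + 2 * (α / ‖ζ‖) * ρ * δ * (D + δ / 2) + α ^ 2 := by
    intro δ hδ
    obtain ⟨xb, hxb, hxbd⟩ := (Metric.infDist_lt_iff hXstarNe).mp
      (show Metric.infDist x Xstar < D + δ by rw [← hD]; linarith)
    set r : ℝ := ‖x - xb‖ with hrdef
    clear_value r
    have hr : r < D + δ := by rw [hrdef, ← dist_eq_norm]; exact hxbd
    have hr0 : 0 ≤ r := by rw [hrdef]; exact norm_nonneg _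
    have hDr : D ≤ r := by
      rw [hrdef, ← dist_eq_norm, hD]; exact Metric.infDist_le_dist_of_mem hxb
    have hgxb : g xb = gstar := hgstar xb hxb
    -- subgradient inequality gives a lower bound on ⟪ζ, x - xb⟫
    have hinner : μ * D - ρ / 2 * r ^ 2 ≤ ⟪ζ, x - xb⟫_ℝ := by
      have h1 := hζ xb
      have h2 : ⟪ζ, x - xb⟫_ℝ = - ⟪ζ, xb - x⟫_ℝ := by
        rw [← inner_neg_right]; congr 1; abel
      have h3 : ‖xb - x‖ = r := by rw [hrdef, norm_sub_rev]
      have h4 := hsharp x hxX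
      rw [← hD] at h4
      rw [hgxb, h3] at h1
      rw [h2]
      nlinarith [h1, h4]
    set s : ℝ := α / ‖ζ‖ with hsdef
    have hs : 0 < s := div_pos hα hζn
    clear_value s
    -- expansion of ‖z - xb‖²
    have hzexp : ‖z - xb‖ ^ 2 = r ^ 2 - 2 * s * ⟪ζ, x - xb⟫_ℝ + α ^ 2 := by
      have h5 : z - xb = (x - xb) - s • ζ := by rw [hzdef]; abel
      rw [h5, norm_sub_sq_real, real_inner_smul_right, real_inner_comm, norm_smul]
      have h6 : ‖s • ζ‖ = α := by
        rw [norm_smul, Real.norm_eq_abs, abs_of_pos hs, hsdef, div_mul_cancel₀]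
        exact hζn.ne'
      have h7 : (‖s‖ * ‖ζ‖) ^ 2 = α ^ 2 := by
        rw [← norm_smul, h6]
      rw [h7, hrdef]; ring
    -- chain of inequalities
    have hchain : Metric.infDist xp Xstar ^ 2 ≤ ‖z - xb‖ ^ 2 := by
      have h8 : Metric.infDist xp Xstar ≤ ‖xp - xb‖ := by
        rw [← dist_eq_norm]; exact Metric.infDist_le_dist_of_mem hxb
      have h9 : ‖xp - xb‖ ≤ ‖z - xb‖ := hcontr xb (hXstarX hxb)
      have h10 : (0 : ℝ) ≤ Metric.infDist xp Xstar := Metric.infDist_nonneg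
      nlinarith
    have hρD : D * ρ < μ := (lt_div_iff₀ hρ).mp hxtube
    have hB : 2 * s * (μ * D - ρ / 2 * r ^ 2) ≤ 2 * s * ⟪ζ, x - xb⟫_ℝ :=
      mul_le_mul_of_nonneg_left hinner (by positivity)
    have hr2 : r ^ 2 ≤ (D + δ) ^ 2 := by nlinarith [hr, hr0]
    have hsρr : s * ρ * r ^ 2 ≤ s * ρ * (D + δ) ^ 2 :=
      mul_le_mul_of_nonneg_left hr2 (by positivity)
    have hsρD : s * ρ * D ^ 2 ≤ s * (μ * D) := by
      have : ρ * D ^ 2 ≤ μ * D := by nlinarith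
      nlinarith
    have hsμD : 0 ≤ s * (μ * D) := by positivity
    nlinarith [hchain, hzexp, hB, hsρr, hsρD, hsμD]
  -- pass to the limit δ → 0⁺
  have hmain : Metric.infDist xp Xstar ^ 2 ≤ D ^ 2 + α ^ 2 := by
    have hlim : Filter.Tendsto
        (fun δ : ℝ => (D + δ) ^ 2 + 2 * (α / ‖ζ‖) * ρ * δ * (D + δ / 2) + α ^ 2)
        (nhdsWithin 0 (Set.Ioi 0)) (nhds (D ^ 2 + α ^ 2)) := by
      have hc : Continuous fun δ : ℝ => (D + δ) ^ 2 + 2 * (α / ‖ζ‖) * ρ * δ * (D + δ / 2) + α ^ 2 :=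
        ((((continuous_const.add continuous_id).pow 2).add
          (((continuous_const.mul continuous_id).mul
            (continuous_const.add (continuous_id.div_const 2)))))).add continuous_const
      have h0 : (D + 0) ^ 2 + 2 * (α / ‖ζ‖) * ρ * 0 * (D + 0 / 2) + α ^ 2 = D ^ 2 + α ^ 2 := by
        ring
      exact h0 ▸ (hc.tendsto 0).mono_left nhdsWithin_le_nhds
    exact ge_of_tendsto hlim
      (Filter.eventually_of_mem self_mem_nhdsWithin fun δ hδ => key δ hδ)
  linarith [sq_nonneg α, hxE, hmain]
end

section
/- (Linear convergence of the subgradient method with geometrically decaying stepsize.) Suppose g is μ-sharp on 𝒳 with 𝒳* nonempty, fix L with 0 < μ ≤ L, set τ = μ/L, fix γ ∈ (0,1), and suppose τ ≤ √(1/(2 − γ)). Set λ = γμ²/(ρL) and q = √(1 − (1 − γ)τ²). Suppose every weak subgradient of g at every point of the tube 𝒯₁ has norm at most L. Let x : ℕ → ℝ^d and ζ : ℕ → ℝ^d be sequences with x₀ ∈ 𝒯_γ, such that for every k the vector ζ_k is a weak subgradient of g at x_k and x_{k+1} = proj_𝒳( x_k − λ·q^k·ζ_k/‖ζ_k‖ ),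 with the convention that x_{k+1} = x_k when ζ_k = 0. Then for every k ≥ 0, dist²(x_k, 𝒳*) ≤ (γμ/ρ)²·(1 − (1 − γ)τ²)^k. -/
open scoped InnerProductSpace

lemma arith_endpoint (τ γ Q p D : ℝ) (hγ0 : 0 ≤ γ)
    (hτQ : τ^2 ≤ Q) (hQ : Q = 1 - (1-γ)*τ^2)
    (hp0 : 0 ≤ p) (hp1 : p ≤ 1) (hD0 : 0 ≤ D) (hDp : D ≤ p) :
    D^2 + γ*τ^2*p*D^2 - 2*τ^2*p*D + τ^2*p^2 ≤ Q*p^2 := by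
  rcases le_or_gt 0 (1 + γ*τ^2*p - 2*τ^2) with h | h
  · nlinarith [mul_nonneg hD0 hp0, mul_nonneg (mul_nonneg hD0 hD0) hp0,
      mul_nonneg (mul_nonneg hγ0 (sq_nonneg τ)) (mul_nonneg hp0 hD0),
      mul_nonneg (mul_nonneg hp0 hp0) (mul_nonneg hγ0 (sq_nonneg τ)),
      mul_le_mul_of_nonneg_left hDp (mul_nonneg (mul_nonneg hγ0 (sq_nonneg τ)) hp0),
      mul_nonneg (sub_nonneg.2 hDp) hD0,
      mul_le_mul_of_nonneg_right (mul_le_mul_of_nonneg_left hp1 (mul_nonneg hγ0 (sq_nonneg τ))) (mul_nonneg hp0 hp0),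
      mul_le_mul_of_nonneg_left hDp h]
  · nlinarith [mul_nonneg hD0 hp0, sq_nonneg τ,
      mul_nonneg (mul_nonneg hγ0 (sq_nonneg τ)) (mul_nonneg hp0 (mul_nonneg hD0 hD0)),
      mul_nonneg (sub_nonneg.2 hDp) hD0, mul_nonneg (mul_nonneg hp0 hp0) (sub_nonneg.2 hτQ),
      mul_nonpos_of_nonneg_of_nonpos (mul_nonneg hD0 hp0) h.le]

set_option maxHeartbeats 1000000 in
/-- **Linear convergence of the subgradient method with geometrically decaying stepsize.**
If `g` is `μ`-sharp on `X` with nonempty solution set `Xstar`, `0 < μ ≤ L`, `τ = μ/L`,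
`γ ∈ (0,1)`, `τ ≤ √(1/(2-γ))`, `λ = γμ²/(ρL)`, `q = √(1 - (1-γ)τ²)`, weak subgradients on
the tube `𝒯₁` are bounded by `L` in norm, and the iterates follow the subgradient method
with stepsize `λ·q^k` started in `𝒯_γ`, then
`dist²(x_k, Xstar) ≤ (γμ/ρ)²·(1 - (1-γ)τ²)^k` for all `k`. -/
theorem geometric_stepsize_linear_rate
    {d : ℕ} (hd : 1 ≤ d)
    (g : EuclideanSpace ℝ (Fin d) → ℝ) (μ ρ L γ : ℝ)
    (hμ : 0 < μ) (hρ : 0 < ρ) (hμL : μ ≤ L) (hγ : γ ∈ Set.Ioo (0 : ℝ) 1)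
    (hτ : μ / L ≤ Real.sqrt (1 / (2 - γ)))
    (lam q : ℝ)
    (hlam : lam = γ * μ ^ 2 / (ρ * L))
    (hq : q = Real.sqrt (1 - (1 - γ) * (μ / L) ^ 2))
    (X Xstar : Set (EuclideanSpace ℝ (Fin d)))
    (hXne : X.Nonempty) (hXcl : IsClosed X) (hXcv : Convex ℝ X)
    (hXstar : Xstar = {x | x ∈ X ∧ ∀ y ∈ X, g x ≤ g y})
    (hXstarNe : Xstar.Nonempty)
    -- `gstar` is the minimal value of `g` over `X`
    (gstar : ℝ) (hgstar : ∀ z ∈ Xstar, g z = gstar)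
    -- sharpness
    (hsharp : ∀ x ∈ X, μ * Metric.infDist x Xstar ≤ g x - gstar)
    -- every weak subgradient at every point of the tube `𝒯₁` has norm at most `L`
    (hbound : ∀ x ∈ X, Metric.infDist x Xstar < μ / ρ →
      ∀ v : EuclideanSpace ℝ (Fin d),
        (∀ y, g x + ⟪v, y - x⟫_ℝ - ρ / 2 * ‖y - x‖ ^ 2 ≤ g y) → ‖v‖ ≤ L)
    -- the iterate and subgradient sequences
    (x ζ : ℕ → EuclideanSpace ℝ (Fin d))
    -- initialization in the tube `𝒯_γ`
    (hx0 : x 0 ∈ X) (hx0tube : Metric.infDist (x 0) Xstar < γ * μ / ρ)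
    -- `ζ k` is a weak subgradient of `g` at `x k`
    (hζ : ∀ k, ∀ y, g (x k) + ⟪ζ k, y - x k⟫_ℝ - ρ / 2 * ‖y - x k‖ ^ 2 ≤ g y)
    -- geometrically decaying stepsize update: projection of `x k - λ q^k ζ k/‖ζ k‖` onto `X`
    (hupdate : ∀ k, ζ k ≠ 0 →
      x (k + 1) ∈ X ∧
      ∀ y ∈ X, dist (x k - (lam * q ^ k / ‖ζ k‖) • ζ k) (x (k + 1)) ≤
        dist (x k - (lam * q ^ k / ‖ζ k‖) • ζ k) y)
    (hstop : ∀ k, ζ k = 0 → x (k + 1) = x k) :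
    ∀ k : ℕ, Metric.infDist (x k) Xstar ^ 2 ≤
      (γ * μ / ρ) ^ 2 * (1 - (1 - γ) * (μ / L) ^ 2) ^ k := by
  have hL : 0 < L := lt_of_lt_of_le hμ hμL
  obtain ⟨hγ0, hγ1⟩ := hγ
  set Q : ℝ := 1 - (1 - γ) * (μ / L) ^ 2 with hQdef
  have hτpos : 0 < μ / L := div_pos hμ hL
  have hτ1 : μ / L ≤ 1 := (div_le_one hL).2 hμL
  have hττ : (μ / L) ^ 2 ≤ 1 := by
    nlinarith [mul_nonneg (sub_nonneg.2 hτ1) hτpos.le]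
  have hQpos : 0 < Q := by
    rw [hQdef]
    nlinarith [mul_le_mul_of_nonneg_left hττ (by linarith : (0:ℝ) ≤ 1 - γ)]
  have hQ1 : Q ≤ 1 := by
    rw [hQdef]
    nlinarith [mul_nonneg (by linarith : (0:ℝ) ≤ 1 - γ) (sq_nonneg (μ/L))]
  have hq0 : 0 < q := by rw [hq]; exact Real.sqrt_pos.2 hQpos
  have hq2 : q ^ 2 = Q := by rw [hq]; exact Real.sq_sqrt hQpos.le
  have hq1 : q ≤ 1 := by rw [hq]; exact Real.sqrt_le_one.2 hQ1
  have hτQ : (μ / L) ^ 2 ≤ Q := by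
    have h2γ : 0 < 2 - γ := by linarith
    have h1 : (μ / L) ^ 2 ≤ 1 / (2 - γ) := (Real.le_sqrt hτpos.le (by positivity)).1 hτ
    have h2 : (μ / L) ^ 2 * (2 - γ) ≤ 1 := by
      have := (le_div_iff₀ h2γ).1 h1; linarith
    rw [hQdef]; nlinarith
  have hc : 0 < γ * μ / ρ := by positivity
  have hXsub : Xstar ⊆ X := by rw [hXstar]; exact fun z hz => hz.1
  have hqk2 : ∀ k : ℕ, (q ^ k) ^ 2 = Q ^ k := fun k => by
    rw [← pow_mul, mul_comm, pow_mul, hq2]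
  have happrox : ∀ (y : EuclideanSpace ℝ (Fin d)), ∀ ε > (0:ℝ), ∃ z ∈ Xstar,
      dist y z ^ 2 < Metric.infDist y Xstar ^ 2 + ε := by
    intro y ε hε
    have hD0 : (0:ℝ) ≤ Metric.infDist y Xstar := Metric.infDist_nonneg
    have hlt : Metric.infDist y Xstar < Real.sqrt (Metric.infDist y Xstar ^ 2 + ε) := by
      nth_rewrite 1 [show Metric.infDist y Xstar = Real.sqrt (Metric.infDist y Xstar ^ 2) from
        (Real.sqrt_sq hD0).symm]
      exact Real.sqrt_lt_sqrt (sq_nonneg _) (by linarith)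
    obtain ⟨z, hz, hdz⟩ := (Metric.infDist_lt_iff hXstarNe).1 hlt
    refine ⟨z, hz, ?_⟩
    have h1 : dist y z ^ 2 < Real.sqrt (Metric.infDist y Xstar ^ 2 + ε) ^ 2 :=
      pow_lt_pow_left₀ hdz dist_nonneg (by norm_num)
    rwa [Real.sq_sqrt (by positivity)] at h1
  have key : ∀ k : ℕ, x k ∈ X ∧
      Metric.infDist (x k) Xstar ^ 2 ≤ (γ * μ / ρ) ^ 2 * Q ^ k := by
    intro k
    induction k with
    | zero =>
      refine ⟨hx0, ?_⟩
      have h0 : (0:ℝ) ≤ Metric.infDist (x 0) Xstar := Metric.infDist_nonneg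
      simp only [pow_zero, mul_one]
      nlinarith
    | succ k ih =>
      obtain ⟨hxk, hIH⟩ := ih
      set D := Metric.infDist (x k) Xstar with hDdef
      have hD0 : 0 ≤ D := by rw [hDdef]; exact Metric.infDist_nonneg
      have hMD : D ≤ γ * μ / ρ * q ^ k := by
        have hM0 : 0 ≤ γ * μ / ρ * q ^ k := by positivity
        have hM2 : D ^ 2 ≤ (γ * μ / ρ * q ^ k) ^ 2 := by
          rw [mul_pow, hqk2 k]; exact hIH
        nlinarith
      have hDc : D ≤ γ * μ / ρ := by
        have : q ^ k ≤ 1 := pow_le_one₀ hq0.le hq1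
        nlinarith
      have hDρ : D < μ / ρ := by
        apply lt_of_le_of_lt hDc
        rw [div_lt_div_iff₀ hρ hρ]; nlinarith [mul_pos hμ hρ]
      have hG : μ * D ≤ g (x k) - gstar := by rw [hDdef]; exact hsharp (x k) hxk
      by_cases hz0 : ζ k = 0
      · -- stationary case: D must be 0
        have hupeq := hstop k hz0
        have hkey : μ * D ≤ ρ / 2 * D ^ 2 := by
          refine le_of_forall_pos_le_add ?_
          intro ε hε
          obtain ⟨z, hzS, hz2⟩ := happrox (x k) (2 / ρ * ε) (by positivity)
          rw [← hDdef] at hz2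
          have h1 := hζ k z
          rw [hz0, inner_zero_left] at h1
          have hgz : g z = gstar := hgstar z hzS
          have hdist : ‖z - x k‖ = dist (x k) z := by rw [dist_eq_norm, norm_sub_rev]
          have hmul : ρ / 2 * (dist (x k) z ^ 2) ≤ ρ / 2 * (D ^ 2 + 2 / ρ * ε) :=
            mul_le_mul_of_nonneg_left hz2.le (by positivity)
          have hfs : ρ / 2 * (2 / ρ * ε) = ε := by field_simp
          rw [hdist] at h1
          linarith
        have hDzero : D = 0 := by
          have h1 : D * ρ ≤ γ * μ := (le_div_iff₀ hρ).1 hDc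
          have h2 : D * ρ * D ≤ γ * μ * D := mul_le_mul_of_nonneg_right h1 hD0
          refine le_antisymm ?_ hD0
          by_contra hcon
          push_neg at hcon
          have h3 : 0 < (1 - γ) * (μ * D) := mul_pos (by linarith) (mul_pos hμ hcon)
          nlinarith
        refine ⟨hupeq ▸ hxk, ?_⟩
        rw [hupeq, ← hDdef, hDzero]
        norm_num
        positivity
      · -- main case
        obtain ⟨hx1X, hmin⟩ := hupdate k hz0
        set s : ℝ := lam * q ^ k / ‖ζ k‖ with hsdef
        set w := x k - s • ζ k with hwdef
        have hζpos : 0 < ‖ζ k‖ := norm_pos_iff.2 hz0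
        have hζL : ‖ζ k‖ ≤ L := hbound (x k) hxk (hDdef ▸ hDρ) (ζ k) (hζ k)
        have hlampos : 0 < lam := by rw [hlam]; positivity
        have hspos : 0 < s := by
          rw [hsdef]; exact div_pos (by positivity) hζpos
        have hsζ : s * ‖ζ k‖ = lam * q ^ k := by
          rw [hsdef]; exact div_mul_cancel₀ _ hζpos.ne'
        have hslow : lam * q ^ k / L ≤ s := by
          rw [hsdef]; exact div_le_div_of_nonneg_left (by positivity) hζpos hζL
        have hproj : ∀ z ∈ X, ‖x (k+1) - z‖ ^ 2 ≤ ‖w - z‖ ^ 2 := by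
          have hne : Nonempty X := ⟨⟨x (k+1), hx1X⟩⟩
          have heq : ‖w - x (k+1)‖ = ⨅ y : X, ‖w - (y : EuclideanSpace ℝ (Fin d))‖ := by
            apply le_antisymm
            · apply le_ciInf
              intro y
              have := hmin y y.2
              rwa [dist_eq_norm, dist_eq_norm] at this
            · exact ciInf_le (f := fun y : X => ‖w - (y : EuclideanSpace ℝ (Fin d))‖)
                ⟨0, by rintro b ⟨y, rfl⟩; exact norm_nonneg _⟩ ⟨x (k+1), hx1X⟩
          have hineq := (norm_eq_iInf_iff_real_inner_le_zero hXcv hx1X).1 heq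
          intro z hzX
          have h1 := hineq z hzX
          have hexp := norm_add_sq_real (w - x (k+1)) (x (k+1) - z)
          have habel : w - x (k+1) + (x (k+1) - z) = w - z := by abel
          rw [habel] at hexp
          have h2 : ⟪w - x (k+1), x (k+1) - z⟫_ℝ = - ⟪w - x (k+1), z - x (k+1)⟫_ℝ := by
            rw [← inner_neg_right]; congr 1; abel
          linarith [sq_nonneg ‖w - x (k+1)‖]
        have hexpand : ∀ z : EuclideanSpace ℝ (Fin d),
            ‖w - z‖ ^ 2 = ‖x k - z‖ ^ 2 - 2 * s * ⟪ζ k, x k - z⟫_ℝ + (lam * q ^ k) ^ 2 := by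
          intro z
          have hwz : w - z = (x k - z) - s • ζ k := by rw [hwdef]; abel
          rw [hwz, norm_sub_sq_real, real_inner_smul_right, norm_smul,
            Real.norm_eq_abs, abs_of_pos hspos, mul_pow,
            real_inner_comm (x k - z) (ζ k)]
          have h3 : s ^ 2 * ‖ζ k‖ ^ 2 = (lam * q ^ k) ^ 2 := by
            rw [← mul_pow, hsζ]
          rw [h3]; ring
        have hmain : Metric.infDist (x (k+1)) Xstar ^ 2 ≤
            D ^ 2 + s * (ρ * D ^ 2 - 2 * (g (x k) - gstar)) + (lam * q ^ k) ^ 2 := by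
          refine le_of_forall_pos_le_add ?_
          intro ε hε
          obtain ⟨z, hzS, hz2⟩ := happrox (x k) (ε / (1 + s * ρ)) (by positivity)
          rw [← hDdef, dist_eq_norm] at hz2
          have hzX := hXsub hzS
          have hA : Metric.infDist (x (k+1)) Xstar ^ 2 ≤ ‖x (k+1) - z‖ ^ 2 := by
            have h1 := Metric.infDist_le_dist_of_mem (x := x (k+1)) hzS
            rw [dist_eq_norm] at h1
            exact pow_le_pow_left₀ Metric.infDist_nonneg h1 2
          have hB := hproj z hzX
          have hC := hexpand z
          have hsub := hζ k z
          have hgz : g z = gstar := hgstar z hzS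
          have hiz : ⟪ζ k, z - x k⟫_ℝ = - ⟪ζ k, x k - z⟫_ℝ := by
            rw [← inner_neg_right]; congr 1; abel
          have hnorm : ‖z - x k‖ = ‖x k - z‖ := norm_sub_rev _ _
          rw [hiz, hnorm, hgz] at hsub
          have hI : g (x k) - gstar - ρ / 2 * ‖x k - z‖ ^ 2 ≤ ⟪ζ k, x k - z⟫_ℝ := by linarith
          have hstep1 : s * (g (x k) - gstar - ρ / 2 * ‖x k - z‖ ^ 2) ≤ s * ⟪ζ k, x k - z⟫_ℝ :=
            mul_le_mul_of_nonneg_left hI hspos.le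
          have hstep2 : (1 + s * ρ) * ‖x k - z‖ ^ 2 ≤ (1 + s * ρ) * (D ^ 2 + ε / (1 + s * ρ)) :=
            mul_le_mul_of_nonneg_left hz2.le (by positivity)
          have hstep2' : (1 + s * ρ) * (D ^ 2 + ε / (1 + s * ρ)) = D ^ 2 + s * ρ * D ^ 2 + ε := by
            field_simp
          linarith
        have hneg : ρ * D ^ 2 - 2 * μ * D ≤ 0 := by
          have h1 : D * ρ ≤ γ * μ := (le_div_iff₀ hρ).1 hDc
          have h2 : D * ρ * D ≤ γ * μ * D := mul_le_mul_of_nonneg_right h1 hD0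
          nlinarith [mul_nonneg hμ.le hD0]
        have hmono1 : s * (ρ * D ^ 2 - 2 * (g (x k) - gstar)) ≤ s * (ρ * D ^ 2 - 2 * μ * D) :=
          mul_le_mul_of_nonneg_left (by linarith) hspos.le
        have hmono2 : s * (ρ * D ^ 2 - 2 * μ * D) ≤ (lam * q ^ k / L) * (ρ * D ^ 2 - 2 * μ * D) :=
          mul_le_mul_of_nonpos_right hslow hneg
        have hfinal : D ^ 2 + (lam * q ^ k / L) * (ρ * D ^ 2 - 2 * μ * D) + (lam * q ^ k) ^ 2 ≤
            (γ * μ / ρ) ^ 2 * Q ^ (k + 1) := by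
          have hD'0 : 0 ≤ ρ * D / (γ * μ) := by positivity
          have hD'p : ρ * D / (γ * μ) ≤ q ^ k := by
            rw [div_le_iff₀ (by positivity)]
            have h1 : D * ρ ≤ γ * μ / ρ * q ^ k * ρ := mul_le_mul_of_nonneg_right hMD hρ.le
            have h2 : γ * μ / ρ * q ^ k * ρ = γ * μ * q ^ k := by field_simp
            linarith
          have harith := arith_endpoint (μ / L) γ Q (q ^ k) (ρ * D / (γ * μ)) hγ0.le hτQ hQdef
            (pow_nonneg hq0.le k) (pow_le_one₀ hq0.le hq1) hD'0 hD'p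
          have hmul := mul_le_mul_of_nonneg_left harith (by positivity : (0:ℝ) ≤ (γ * μ / ρ) ^ 2)
          calc D ^ 2 + (lam * q ^ k / L) * (ρ * D ^ 2 - 2 * μ * D) + (lam * q ^ k) ^ 2
              = (γ * μ / ρ) ^ 2 * ((ρ * D / (γ * μ)) ^ 2
                  + γ * (μ / L) ^ 2 * q ^ k * (ρ * D / (γ * μ)) ^ 2
                  - 2 * (μ / L) ^ 2 * q ^ k * (ρ * D / (γ * μ)) + (μ / L) ^ 2 * (q ^ k) ^ 2) := by
                rw [hlam]; field_simp; ring
            _ ≤ (γ * μ / ρ) ^ 2 * (Q * (q ^ k) ^ 2) := hmul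
            _ = (γ * μ / ρ) ^ 2 * Q ^ (k + 1) := by rw [hqk2 k, pow_succ]; ring
        exact ⟨hx1X, by linarith⟩
  intro k
  exact (key k).2
end

section
/- (Induction step for the geometrically decaying stepsize.) Suppose g is μ-sharp on 𝒳 with 𝒳* nonempty, fix L with 0 < μ ≤ L, set τ = μ/L, fix γ ∈ (0,1) with τ ≤ √(1/(2 − γ)), and set λ = γμ²/(ρL), q = √(1 − (1 − γ)τ²), and M = γμ/ρ. Let k ∈ ℕ, let x ∈ 𝒳 satisfy dist(x, 𝒳*) ≤ M·q^k, let ζ ≠ 0 be a weak subgradient of g at x with ‖ζ‖ ≤ L, and set x⁺ = proj_𝒳( x − λ·q^k·ζ/‖ζ‖ ). Then dist(x⁺, 𝒳*) ≤ M·q^{k+1}. -/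
open scoped InnerProductSpace

lemma proj_dist_le {d : ℕ} {X : Set (EuclideanSpace ℝ (Fin d))}
    (hXcv : Convex ℝ X) {z xp w : EuclideanSpace ℝ (Fin d)}
    (hxpX : xp ∈ X) (hw : w ∈ X)
    (hxp : ∀ y ∈ X, dist z xp ≤ dist z y) :
    dist xp w ≤ dist z w := by
  have hne : Nonempty X := ⟨⟨xp, hxpX⟩⟩
  have hbdd : BddBelow (Set.range fun w : X => ‖z - (w : EuclideanSpace ℝ (Fin d))‖) := by
    refine ⟨0, ?_⟩
    rintro b ⟨w, rfl⟩
    exact norm_nonneg _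
  have hinf : ‖z - xp‖ = ⨅ w : X, ‖z - (w : EuclideanSpace ℝ (Fin d))‖ := by
    refine le_antisymm (le_ciInf fun w => ?_) ?_
    · simpa [dist_eq_norm] using hxp w w.2
    · exact ciInf_le hbdd ⟨xp, hxpX⟩
  have hin : ⟪z - xp, w - xp⟫_ℝ ≤ 0 :=
    (norm_eq_iInf_iff_real_inner_le_zero hXcv hxpX).1 hinf w hw
  have hexp : ‖z - w‖ ^ 2 = ‖z - xp‖ ^ 2 + 2 * ⟪z - xp, xp - w⟫_ℝ + ‖xp - w‖ ^ 2 := by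
    have h := norm_add_sq_real (z - xp) (xp - w)
    rw [sub_add_sub_cancel] at h
    exact h
  have h2 : 0 ≤ ⟪z - xp, xp - w⟫_ℝ := by
    have hneg : ⟪z - xp, xp - w⟫_ℝ = - ⟪z - xp, w - xp⟫_ℝ := by
      rw [← neg_sub w xp, inner_neg_right]
    rw [hneg]
    linarith
  have hsq : ‖xp - w‖ ^ 2 ≤ ‖z - w‖ ^ 2 := by nlinarith [sq_nonneg ‖z - xp‖]
  rw [dist_eq_norm, dist_eq_norm]
  exact (pow_le_pow_iff_left₀ (norm_nonneg _) (norm_nonneg _) two_ne_zero).1 hsq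

lemma geo_arith (τ γ t D M q2 : ℝ) (hτ0 : 0 < τ)
    (hγ0 : 0 < γ) (hγ1 : γ < 1) (ht0 : 0 < t) (ht1 : t ≤ 1) (hM : 0 < M)
    (hq2 : q2 = 1 - (1 - γ) * τ ^ 2) (hτq : τ ^ 2 ≤ q2)
    (hD0 : 0 ≤ D) (hDB : D ≤ M * t) :
    D ^ 2 + γ * τ ^ 2 * t * D ^ 2 - 2 * M * τ ^ 2 * t * D + M ^ 2 * τ ^ 2 * t ^ 2
      ≤ M ^ 2 * t ^ 2 * q2 := by
  subst hq2
  have hB : 0 < M * t := mul_pos hM ht0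
  have ha : (0:ℝ) < 1 + γ * τ ^ 2 * t := by positivity
  have hF0 : M ^ 2 * τ ^ 2 * t ^ 2 ≤ M ^ 2 * t ^ 2 * (1 - (1 - γ) * τ ^ 2) := by
    nlinarith [sq_nonneg (M * t), hτq]
  have hFB : (M*t) ^ 2 + γ * τ ^ 2 * t * (M*t) ^ 2 - 2 * M * τ ^ 2 * t * (M*t)
      + M ^ 2 * τ ^ 2 * t ^ 2 ≤ M ^ 2 * t ^ 2 * (1 - (1 - γ) * τ ^ 2) := by
    nlinarith [mul_nonneg (mul_nonneg (sq_nonneg (M*t)) (mul_pos hγ0 (mul_pos (pow_pos hτ0 2) ht0)).le) (sub_nonneg.2 ht1)]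
  have h1 := mul_nonneg hD0 (sub_nonneg.2 hFB)
  have h2 := mul_nonneg (sub_nonneg.2 hDB) (sub_nonneg.2 hF0)
  have h3 : 0 ≤ (1 + γ * τ ^ 2 * t) * (M * t) * D * (M * t - D) :=
    mul_nonneg (mul_nonneg (mul_nonneg ha.le hB.le) hD0) (sub_nonneg.2 hDB)
  nlinarith [h1, h2, h3, hB]


lemma geo_arg_pos (γ τ : ℝ) (hγ0 : 0 < γ) (hγ1 : γ < 1) (hτ0 : 0 < τ) (hτ1 : τ ≤ 1) :
    0 < 1 - (1 - γ) * τ ^ 2 := by nlinarith [sq_nonneg τ, pow_pos hτ0 2]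

lemma geo_arg_le_one (γ τ : ℝ) (hγ0 : 0 < γ) (hγ1 : γ < 1) (hτ0 : 0 < τ) (hτ1 : τ ≤ 1) :
    1 - (1 - γ) * τ ^ 2 ≤ 1 := by nlinarith [sq_nonneg τ]

lemma geo_step_bound (A I D δ α ρ μ s : ℝ) (hα : 0 < α) (hρ : 0 < ρ) (hμ : 0 < μ)
    (hA0 : 0 ≤ A) (hAd : A ≤ D + δ) (hD0 : 0 ≤ D)
    (hip : μ * D - ρ / 2 * A ^ 2 ≤ I) :
    A ^ 2 - 2 * α * I + s ^ 2 ≤ (1 + α * ρ) * (D + δ) ^ 2 - 2 * α * μ * D + s ^ 2 := by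
  nlinarith [mul_le_mul_of_nonneg_left (pow_le_pow_left₀ hA0 hAd 2)
      (by positivity : (0:ℝ) ≤ 1 + α * ρ),
    mul_le_mul_of_nonneg_left hip (by positivity : (0:ℝ) ≤ 2 * α)]

lemma geo_coef_nonpos (ρ μ γ M t D : ℝ) (hρ : 0 < ρ) (hμ : 0 < μ)
    (hγ0 : 0 < γ) (hγ1 : γ < 1) (ht0 : 0 < t) (ht1 : t ≤ 1)
    (hρM : ρ * M = γ * μ) (hD0 : 0 ≤ D) (hDB : D ≤ M * t) :
    ρ * D ^ 2 - 2 * μ * D ≤ 0 := by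
  have h1 : ρ * D ≤ 2 * μ := by
    have ha : ρ * D ≤ ρ * (M * t) := mul_le_mul_of_nonneg_left hDB hρ.le
    have hb : γ * μ * t ≤ γ * μ * 1 := mul_le_mul_of_nonneg_left ht1 (mul_pos hγ0 hμ).le
    have hc : γ * μ ≤ μ := by nlinarith
    nlinarith [ha, hb, hc]
  have h2 : 0 ≤ D * (2 * μ - ρ * D) := mul_nonneg hD0 (by linarith)
  nlinarith [h2]


set_option maxHeartbeats 1000000

/-- **Induction step for the geometrically decaying stepsize.**
If `g` is `μ`-sharp on `X` with nonempty solution set `Xstar`, `0 < μ ≤ L`, `τ = μ/L`,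
`γ ∈ (0,1)` with `τ ≤ √(1/(2-γ))`, `λ = γμ²/(ρL)`, `q = √(1 - (1-γ)τ²)`, `M = γμ/ρ`,
`x ∈ X` satisfies `dist(x, Xstar) ≤ M·q^k`, `ζ ≠ 0` is a weak subgradient of `g` at `x`
with `‖ζ‖ ≤ L`, and `x⁺ = proj_X(x - λ·q^k·ζ/‖ζ‖)`, then `dist(x⁺, Xstar) ≤ M·q^(k+1)`. -/
theorem geometric_stepsize_induction_step
    {d : ℕ} (hd : 1 ≤ d)
    (g : EuclideanSpace ℝ (Fin d) → ℝ) (μ ρ L γ : ℝ)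
    (hμ : 0 < μ) (hρ : 0 < ρ) (hμL : μ ≤ L) (hγ : γ ∈ Set.Ioo (0 : ℝ) 1)
    (hτ : μ / L ≤ Real.sqrt (1 / (2 - γ)))
    (lam q M : ℝ)
    (hlam : lam = γ * μ ^ 2 / (ρ * L))
    (hq : q = Real.sqrt (1 - (1 - γ) * (μ / L) ^ 2))
    (hM : M = γ * μ / ρ)
    (X Xstar : Set (EuclideanSpace ℝ (Fin d)))
    (hXne : X.Nonempty) (hXcl : IsClosed X) (hXcv : Convex ℝ X)
    (hXstar : Xstar = {x | x ∈ X ∧ ∀ y ∈ X, g x ≤ g y})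
    (hXstarNe : Xstar.Nonempty)
    -- `gstar` is the minimal value of `g` over `X`
    (gstar : ℝ) (hgstar : ∀ z ∈ Xstar, g z = gstar)
    -- sharpness
    (hsharp : ∀ x ∈ X, μ * Metric.infDist x Xstar ≤ g x - gstar)
    (k : ℕ)
    (x : EuclideanSpace ℝ (Fin d)) (hxX : x ∈ X)
    (hxdist : Metric.infDist x Xstar ≤ M * q ^ k)
    -- `ζ ≠ 0` is a weak subgradient of `g` at `x` with `‖ζ‖ ≤ L`
    (ζ : EuclideanSpace ℝ (Fin d)) (hζ0 : ζ ≠ 0) (hζL : ‖ζ‖ ≤ L)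
    (hζ : ∀ y, g x + ⟪ζ, y - x⟫_ℝ - ρ / 2 * ‖y - x‖ ^ 2 ≤ g y)
    -- `xp` is the projection onto `X` of `x - λ·q^k·ζ/‖ζ‖`
    (xp : EuclideanSpace ℝ (Fin d)) (hxpX : xp ∈ X)
    (hxp : ∀ y ∈ X, dist (x - (lam * q ^ k / ‖ζ‖) • ζ) xp ≤
      dist (x - (lam * q ^ k / ‖ζ‖) • ζ) y) :
    Metric.infDist xp Xstar ≤ M * q ^ (k + 1) := by
  obtain ⟨hγ0, hγ1⟩ := hγ
  have hL : 0 < L := lt_of_lt_of_le hμ hμL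
  have hζn : 0 < ‖ζ‖ := norm_pos_iff.mpr hζ0
  set τ : ℝ := μ / L with hτdef
  have hτ0 : 0 < τ := div_pos hμ hL
  have hτ1 : τ ≤ 1 := by rw [hτdef]; exact div_le_one_of_le₀ hμL hL.le
  have h2γ : 0 < 2 - γ := by linarith
  have hτsq : (2 - γ) * τ ^ 2 ≤ 1 := by
    have h1 : τ ^ 2 ≤ Real.sqrt (1 / (2 - γ)) ^ 2 := pow_le_pow_left₀ hτ0.le hτ 2
    rw [Real.sq_sqrt (by positivity)] at h1
    have h2 := (le_div_iff₀ h2γ).1 h1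
    linarith [h2, mul_comm (τ ^ 2) (2 - γ)]
  have hq2 : q ^ 2 = 1 - (1 - γ) * τ ^ 2 := by
    rw [hq]
    exact Real.sq_sqrt (geo_arg_pos γ τ hγ0 hγ1 hτ0 hτ1).le
  have hq0 : 0 < q := by
    rw [hq]
    exact Real.sqrt_pos.mpr (geo_arg_pos γ τ hγ0 hγ1 hτ0 hτ1)
  have hq1 : q ≤ 1 := by
    rw [hq]
    exact (Real.sqrt_le_sqrt (geo_arg_le_one γ τ hγ0 hγ1 hτ0 hτ1)).trans_eq Real.sqrt_one
  have hτq : τ ^ 2 ≤ q ^ 2 := by rw [hq2]; linarith [hτsq]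
  have hM0 : 0 < M := by rw [hM]; positivity
  have hlam0 : 0 < lam := by rw [hlam]; positivity
  set t : ℝ := q ^ k with htdef
  have ht0 : 0 < t := pow_pos hq0 k
  have ht1 : t ≤ 1 := pow_le_one₀ hq0.le hq1
  set s : ℝ := lam * q ^ k with hsdef
  have hs0 : 0 < s := mul_pos hlam0 ht0
  set α : ℝ := lam * q ^ k / ‖ζ‖ with hαdef
  have hα0 : 0 < α := div_pos hs0 hζn
  have hαζ : α * ‖ζ‖ = s := div_mul_cancel₀ _ hζn.ne'
  have hαL : s / L ≤ α := by
    rw [hαdef]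
    exact div_le_div_of_nonneg_left hs0.le hζn hζL
  set D : ℝ := Metric.infDist x Xstar with hDdef
  have hD0 : 0 ≤ D := Metric.infDist_nonneg
  have hDB : D ≤ M * t := hxdist
  -- key estimate for every δ > 0
  have key : ∀ δ : ℝ, 0 < δ → (Metric.infDist xp Xstar) ^ 2
      ≤ (1 + α * ρ) * (D + δ) ^ 2 - 2 * α * μ * D + s ^ 2 := by
    intro δ hδ
    obtain ⟨xb, hxbS, hxbd⟩ := (Metric.infDist_lt_iff hXstarNe).1
      (show Metric.infDist x Xstar < D + δ by rw [← hDdef]; linarith)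
    have hxbX : xb ∈ X := by rw [hXstar] at hxbS; exact hxbS.1
    have hgxb : g xb = gstar := hgstar xb hxbS
    have hP1 : Metric.infDist xp Xstar ≤ dist xp xb := Metric.infDist_le_dist_of_mem hxbS
    have hP2 : dist xp xb ≤ dist (x - α • ζ) xb := proj_dist_le hXcv hxpX hxbX hxp
    have hip : μ * D - ρ / 2 * ‖x - xb‖ ^ 2 ≤ ⟪ζ, x - xb⟫_ℝ := by
      have h1 := hζ xb
      have h2 := hsharp x hxX
      have h3 : ⟪ζ, xb - x⟫_ℝ = - ⟪ζ, x - xb⟫_ℝ := by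
        rw [← neg_sub x xb, inner_neg_right]
      have h4 : ‖xb - x‖ = ‖x - xb‖ := norm_sub_rev _ _
      rw [hgxb, h3, h4] at h1
      rw [← hDdef] at h2
      linarith
    have hsζ : ‖α • ζ‖ = s := by
      rw [norm_smul, Real.norm_eq_abs, abs_of_pos hα0, hαζ]
    have hzb : dist (x - α • ζ) xb ^ 2
        = ‖x - xb‖ ^ 2 - 2 * α * ⟪ζ, x - xb⟫_ℝ + s ^ 2 := by
      rw [dist_eq_norm]
      have harr : x - α • ζ - xb = (x - xb) - α • ζ := sub_right_comm x (α • ζ) xb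
      rw [harr, norm_sub_sq_real, real_inner_smul_right, real_inner_comm, hsζ]
      ring
    have hrd : ‖x - xb‖ ≤ D + δ := by
      rw [← dist_eq_norm]
      exact hxbd.le
    have hnn : (0:ℝ) ≤ ‖x - xb‖ := norm_nonneg _
    have hfin : dist (x - α • ζ) xb ^ 2
        ≤ (1 + α * ρ) * (D + δ) ^ 2 - 2 * α * μ * D + s ^ 2 := by
      rw [hzb]
      exact geo_step_bound _ _ _ _ _ _ _ _ hα0 hρ hμ hnn hrd hD0 hip
    have hPd : Metric.infDist xp Xstar ^ 2 ≤ dist (x - α • ζ) xb ^ 2 :=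
      pow_le_pow_left₀ Metric.infDist_nonneg (hP1.trans hP2) 2
    linarith
  -- pass to the limit δ → 0⁺
  have hVle : (Metric.infDist xp Xstar) ^ 2 ≤ (1 + α * ρ) * D ^ 2 - 2 * α * μ * D + s ^ 2 := by
    have hc : Continuous fun δ : ℝ => (1 + α * ρ) * (D + δ) ^ 2 - 2 * α * μ * D + s ^ 2 := by
      continuity
    have ht : Filter.Tendsto (fun δ : ℝ => (1 + α * ρ) * (D + δ) ^ 2 - 2 * α * μ * D + s ^ 2)
        (nhdsWithin 0 (Set.Ioi 0)) (nhds ((1 + α * ρ) * (D + 0) ^ 2 - 2 * α * μ * D + s ^ 2)) :=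
      (hc.tendsto 0).mono_left nhdsWithin_le_nhds
    have hle : (Metric.infDist xp Xstar) ^ 2
        ≤ (1 + α * ρ) * (D + 0) ^ 2 - 2 * α * μ * D + s ^ 2 := by
      refine ge_of_tendsto ht ?_
      filter_upwards [self_mem_nhdsWithin] with δ hδ
      exact key δ hδ
    simpa using hle
  -- arithmetic conclusion
  have hcoef : ρ * D ^ 2 - 2 * μ * D ≤ 0 := by
    have hρM : ρ * M = γ * μ := by rw [hM]; field_simp
    exact geo_coef_nonpos ρ μ γ M t D hρ hμ hγ0 hγ1 ht0 ht1 hρM hD0 hDB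
  have hmono : α * (ρ * D ^ 2 - 2 * μ * D) ≤ (s / L) * (ρ * D ^ 2 - 2 * μ * D) :=
    mul_le_mul_of_nonpos_right hαL hcoef
  have hsL1 : s / L * ρ = γ * τ ^ 2 * t := by
    rw [hsdef, hlam, hτdef, ← htdef]
    field_simp
  have hsL2 : s / L * μ = M * τ ^ 2 * t := by
    rw [hsdef, hlam, hM, hτdef, ← htdef]
    field_simp
  have hs2 : s ^ 2 = M ^ 2 * τ ^ 2 * t ^ 2 := by
    rw [hsdef, hlam, hM, hτdef, ← htdef]
    field_simp
  have harith : D ^ 2 + γ * τ ^ 2 * t * D ^ 2 - 2 * M * τ ^ 2 * t * D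
      + M ^ 2 * τ ^ 2 * t ^ 2 ≤ M ^ 2 * t ^ 2 * q ^ 2 :=
    geo_arith τ γ t D M (q ^ 2) hτ0 hγ0 hγ1 ht0 ht1 hM0 hq2 hτq hD0 hDB
  have hfinal : (Metric.infDist xp Xstar) ^ 2 ≤ (M * q ^ (k + 1)) ^ 2 := by
    have e1 : (1 + α * ρ) * D ^ 2 - 2 * α * μ * D + s ^ 2
        = D ^ 2 + α * (ρ * D ^ 2 - 2 * μ * D) + s ^ 2 := by ring
    have e2 : D ^ 2 + (s / L) * (ρ * D ^ 2 - 2 * μ * D) + s ^ 2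
        = D ^ 2 + (s / L * ρ) * D ^ 2 - 2 * (s / L * μ) * D + s ^ 2 := by ring
    have e3 : (M * q ^ (k + 1)) ^ 2 = M ^ 2 * t ^ 2 * q ^ 2 := by
      rw [htdef]; ring
    rw [e3]
    rw [e1] at hVle
    calc (Metric.infDist xp Xstar) ^ 2
        ≤ D ^ 2 + α * (ρ * D ^ 2 - 2 * μ * D) + s ^ 2 := hVle
      _ ≤ D ^ 2 + (s / L) * (ρ * D ^ 2 - 2 * μ * D) + s ^ 2 := by linarith
      _ = D ^ 2 + γ * τ ^ 2 * t * D ^ 2 - 2 * (M * τ ^ 2 * t) * D + M ^ 2 * τ ^ 2 * t ^ 2 := by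
          rw [e2, hsL1, hsL2, hs2]
      _ ≤ M ^ 2 * t ^ 2 * q ^ 2 := by linarith [harith]
  have hT0 : 0 ≤ M * q ^ (k + 1) := by positivity
  exact (pow_le_pow_iff_left₀ Metric.infDist_nonneg hT0 two_ne_zero).1 hfinal
end

section
/- (Weak convexity of convex compositions of smooth maps.) Let h : ℝ^m → ℝ be convex and L-Lipschitz, and let c : ℝ^d → ℝ^m be differentiable with β-Lipschitz derivative, i.e. the map x ↦ Dc(x) is β-Lipschitz from ℝ^d to the space of linear maps ℝ^d → ℝ^m equipped with the operator norm. Then the composite function F(x) = h(c(x)) is (Lβ)-weakly convex; that is, the function x ↦ h(c(x)) + (Lβ/2)·‖x‖² is convex on ℝ^d. -/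
open Set

/-- Quadratic Taylor bound for a function with Lipschitz derivative. -/
lemma taylor_quadratic_bound
    {d m : ℕ} (β : ℝ)
    (c : EuclideanSpace ℝ (Fin d) → EuclideanSpace ℝ (Fin m))
    (c' : EuclideanSpace ℝ (Fin d) →
      (EuclideanSpace ℝ (Fin d) →L[ℝ] EuclideanSpace ℝ (Fin m)))
    (hc : ∀ x, HasFDerivAt c (c' x) x)
    (hc'lip : ∀ x y : EuclideanSpace ℝ (Fin d), ‖c' x - c' y‖ ≤ β * ‖x - y‖)
    (a b : EuclideanSpace ℝ (Fin d)) :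
    ‖c b - c a - c' a (b - a)‖ ≤ β / 2 * ‖b - a‖ ^ 2 := by
  set v := b - a with hv
  set w := c' a v with hw
  set g : ℝ → EuclideanSpace ℝ (Fin m) := fun t => c (a + t • v) - t • w - c a with hg
  have hg' : ∀ t : ℝ, HasDerivAt g (c' (a + t • v) v - w) t := by
    intro t
    have h1 : HasDerivAt (fun t : ℝ => a + t • v) v t := by
      simpa using ((hasDerivAt_id t).smul_const v).const_add a
    have h2 : HasDerivAt (fun t : ℝ => c (a + t • v)) (c' (a + t • v) v) t := by
      exact (hc (a + t • v)).comp_hasDerivAt t h1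
    have h3 : HasDerivAt (fun t : ℝ => t • w) w t := by
      simpa using (hasDerivAt_id t).smul_const w
    exact (h2.sub h3).sub_const (c a)
  have hB : ∀ t : ℝ, HasDerivAt (fun t : ℝ => β * ‖v‖ ^ 2 * (t ^ 2 / 2))
      (β * ‖v‖ ^ 2 * t) t := by
    intro t
    have := ((hasDerivAt_pow 2 t).div_const 2).const_mul (β * ‖v‖ ^ 2)
    simpa [mul_comm, mul_assoc, mul_div_assoc] using this
  have bound : ∀ t ∈ Ico (0:ℝ) 1, ‖c' (a + t • v) v - w‖ ≤ β * ‖v‖ ^ 2 * t := by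
    intro t ht
    have h1 : ‖c' (a + t • v) v - w‖ ≤ ‖c' (a + t • v) - c' a‖ * ‖v‖ := by
      have := (c' (a + t • v) - c' a).le_opNorm v
      simpa [hw] using this
    have h2 : ‖c' (a + t • v) - c' a‖ ≤ β * (t * ‖v‖) := by
      have := hc'lip (a + t • v) a
      simpa [norm_smul, abs_of_nonneg ht.1] using this
    have hv0 : (0:ℝ) ≤ ‖v‖ := norm_nonneg _
    calc ‖c' (a + t • v) v - w‖ ≤ β * (t * ‖v‖) * ‖v‖ :=
          h1.trans (by apply mul_le_mul_of_nonneg_right h2 hv0)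
      _ = β * ‖v‖ ^ 2 * t := by ring
  have key := image_norm_le_of_norm_deriv_right_le_deriv_boundary
    (f := g) (f' := fun t => c' (a + t • v) v - w) (a := 0) (b := 1)
    (fun t _ => (hg' t).continuousAt.continuousWithinAt)
    (fun t ht => (hg' t).hasDerivWithinAt)
    (by simp [hg]) hB bound (right_mem_Icc.2 zero_le_one)
  have hab : a + v = b := by rw [hv]; abel
  have hg1 : g 1 = c b - c a - c' a (b - a) := by
    simp only [hg, one_smul, hab, hw, hv]
    abel
  rw [hg1] at key
  calc ‖c b - c a - c' a (b - a)‖ ≤ β * ‖v‖ ^ 2 * (1 ^ 2 / 2) := key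
    _ = β / 2 * ‖b - a‖ ^ 2 := by rw [hv]; ring

/-- **Weak convexity of convex compositions of smooth maps.**
If `h : ℝ^m → ℝ` is convex and `L`-Lipschitz and `c : ℝ^d → ℝ^m` is differentiable with
`β`-Lipschitz derivative, then `F = h ∘ c` is `(Lβ)`-weakly convex, i.e.
`x ↦ h(c(x)) + (Lβ/2)·‖x‖²` is convex on `ℝ^d`. -/
theorem composite_weakly_convex
    {d m : ℕ} (L β : ℝ) (hL : 0 < L) (hβ : 0 < β)
    (h : EuclideanSpace ℝ (Fin m) → ℝ)
    (hconv : ConvexOn ℝ Set.univ h)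
    (hlip : ∀ u v : EuclideanSpace ℝ (Fin m), |h u - h v| ≤ L * ‖u - v‖)
    (c : EuclideanSpace ℝ (Fin d) → EuclideanSpace ℝ (Fin m))
    (c' : EuclideanSpace ℝ (Fin d) →
      (EuclideanSpace ℝ (Fin d) →L[ℝ] EuclideanSpace ℝ (Fin m)))
    (hc : ∀ x, HasFDerivAt c (c' x) x)
    (hc'lip : ∀ x y : EuclideanSpace ℝ (Fin d), ‖c' x - c' y‖ ≤ β * ‖x - y‖) :
    ConvexOn ℝ Set.univ (fun x => h (c x) + L * β / 2 * ‖x‖ ^ 2) := by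
  refine ⟨convex_univ, ?_⟩
  intro x _ y _ θ τ hθ hτ hθτ
  set z := θ • x + τ • y with hz
  have hxz : x - z = τ • (x - y) := by
    rw [hz]
    have : θ = 1 - τ := by linarith
    rw [this]; module
  have hyz : y - z = θ • (y - x) := by
    rw [hz]
    have : τ = 1 - θ := by linarith
    rw [this]; module
  have hnxz : ‖x - z‖ = τ * ‖x - y‖ := by
    rw [hxz, norm_smul, Real.norm_eq_abs, abs_of_nonneg hτ]
  have hnyz : ‖y - z‖ = θ * ‖x - y‖ := by
    rw [hyz, norm_smul, Real.norm_eq_abs, abs_of_nonneg hθ, norm_sub_rev]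
  have tx := taylor_quadratic_bound β c c' hc hc'lip z x
  have ty := taylor_quadratic_bound β c c' hc hc'lip z y
  rw [hnxz] at tx
  rw [hnyz] at ty
  set A := c z + c' z (x - z) with hA
  set B := c z + c' z (y - z) with hB
  have hcomb : θ • A + τ • B = c z := by
    have h0 : θ • (x - z) + τ • (y - z) = 0 := by
      rw [hz]
      have : θ = 1 - τ := by linarith
      rw [this]; module
    have e : θ • A + τ • B
        = (θ + τ) • c z + c' z (θ • (x - z) + τ • (y - z)) := by
      rw [hA, hB, map_add, map_smul, map_smul]
      module
    rw [e, h0, hθτ]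
    simp
  have hcz : h (c z) ≤ θ * h A + τ * h B := by
    have := hconv.2 (Set.mem_univ A) (Set.mem_univ B) hθ hτ hθτ
    rw [hcomb] at this
    simpa [smul_eq_mul] using this
  have hhA : h A ≤ h (c x) + L * (β / 2 * (τ * ‖x - y‖) ^ 2) := by
    have h1 : h A - h (c x) ≤ L * ‖A - c x‖ := le_trans (le_abs_self _) (hlip A (c x))
    have h2 : ‖A - c x‖ ≤ β / 2 * (τ * ‖x - y‖) ^ 2 := by
      have e : A - c x = -(c x - c z - c' z (x - z)) := by rw [hA]; abel
      rw [e, norm_neg]; exact tx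
    nlinarith [mul_le_mul_of_nonneg_left h2 hL.le]
  have hhB : h B ≤ h (c y) + L * (β / 2 * (θ * ‖x - y‖) ^ 2) := by
    have h1 : h B - h (c y) ≤ L * ‖B - c y‖ := le_trans (le_abs_self _) (hlip B (c y))
    have h2 : ‖B - c y‖ ≤ β / 2 * (θ * ‖x - y‖) ^ 2 := by
      have e : B - c y = -(c y - c z - c' z (y - z)) := by rw [hB]; abel
      rw [e, norm_neg]; exact ty
    nlinarith [mul_le_mul_of_nonneg_left h2 hL.le]
  have hnorm : ‖z‖ ^ 2 = θ * ‖x‖ ^ 2 + τ * ‖y‖ ^ 2 - θ * τ * ‖x - y‖ ^ 2 := by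
    have e1 : ‖z‖ ^ 2 = θ ^ 2 * ‖x‖ ^ 2 + 2 * (θ * τ) * inner ℝ x y + τ ^ 2 * ‖y‖ ^ 2 := by
      simp only [hz, ← real_inner_self_eq_norm_sq]
      simp only [inner_add_add_self, real_inner_smul_left, real_inner_smul_right]
      rw [real_inner_comm y x]
      ring
    have e2 : ‖x - y‖ ^ 2 = ‖x‖ ^ 2 - 2 * inner ℝ x y + ‖y‖ ^ 2 := by
      simp only [← real_inner_self_eq_norm_sq, inner_sub_sub_self]
      rw [real_inner_comm y x]
      ring
    rw [e1, e2]
    have hθ' : θ = 1 - τ := by linarith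
    rw [hθ']; ring
  have hmono : θ * h A + τ * h B ≤
      θ * (h (c x) + L * (β / 2 * (τ * ‖x - y‖) ^ 2))
      + τ * (h (c y) + L * (β / 2 * (θ * ‖x - y‖) ^ 2)) :=
    add_le_add (mul_le_mul_of_nonneg_left hhA hθ) (mul_le_mul_of_nonneg_left hhB hτ)
  have key : θ * (h (c x) + L * (β / 2 * (τ * ‖x - y‖) ^ 2))
      + τ * (h (c y) + L * (β / 2 * (θ * ‖x - y‖) ^ 2))
      + L * β / 2 * ‖z‖ ^ 2
      ≤ θ * (h (c x) + L * β / 2 * ‖x‖ ^ 2) + τ * (h (c y) + L * β / 2 * ‖y‖ ^ 2) := by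
    rw [hnorm]
    have hθ' : θ = 1 - τ := by linarith
    rw [hθ']
    apply le_of_eq
    ring
  simp only [smul_eq_mul]
  calc h (c z) + L * β / 2 * ‖z‖ ^ 2
      ≤ (θ * (h (c x) + L * (β / 2 * (τ * ‖x - y‖) ^ 2))
        + τ * (h (c y) + L * (β / 2 * (θ * ‖x - y‖) ^ 2))) + L * β / 2 * ‖z‖ ^ 2 := by
        have := hcz.trans hmono
        linarith
    _ ≤ _ := key
end

section
/- (Local subgradients of weakly convex functions are global weak subgradients.) Let g : ℝ^d → ℝ be ρ-weakly convex, i.e. x ↦ g(x) + (ρ/2)‖x‖² is convex on ℝ^d. Suppose x, v ∈ ℝ^d satisfy the local lower-approximation property g(y) ≥ g(x) + ⟨v, y − x⟩ + o(‖y − x‖) as y → x; formally, the function y ↦ max{0, g(x) + ⟨v, y − x⟩ − g(y)} is little-o of ‖y − x‖ as y → x. Then the global inequality g(y) ≥ g(x) + ⟨v, y − x⟩ − (ρ/2)‖y − x‖² holds for all y ∈ ℝ^d. -/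
open scoped InnerProductSpace

/-- Core lemma: for a convex function, a local (little-o) subgradient is a global
subgradient. -/
lemma convex_local_subgradient_global
    {E : Type*} [NormedAddCommGroup E] [InnerProductSpace ℝ E]
    (G : E → ℝ) (hG : ConvexOn ℝ Set.univ G) (x w : E)
    (h : (fun y => max 0 (G x + ⟪w, y - x⟫_ℝ - G y)) =o[nhds x] (fun y => ‖y - x‖)) :
    ∀ y, G x + ⟪w, y - x⟫_ℝ ≤ G y := by
  intro y
  set u : E := y - x with hu
  -- it suffices to show the inequality up to every ε > 0
  rw [← sub_nonpos]
  by_contra hcon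
  push_neg at hcon
  set δ : ℝ := G x + ⟪w, u⟫_ℝ - G y with hδ
  have hδpos : 0 < δ := hcon
  have hεpos : 0 < δ / (2 * (‖u‖ + 1)) := by positivity
  have hev := h.def hεpos
  -- pull back along the path t ↦ x + t • u, t → 0⁺
  have htend : Filter.Tendsto (fun t : ℝ => x + t • u) (nhdsWithin 0 (Set.Ioi 0)) (nhds x) := by
    have hc : Continuous (fun t : ℝ => x + t • u) := by fun_prop
    have := (hc.tendsto 0).mono_left (nhdsWithin_le_nhds (s := Set.Ioi 0))
    simpa using this
  have hev' := htend.eventually hev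
  have hlt1 : ∀ᶠ t : ℝ in nhdsWithin 0 (Set.Ioi 0), t < 1 :=
    (eventually_lt_nhds one_pos).filter_mono nhdsWithin_le_nhds
  have hmem : ∀ᶠ t : ℝ in nhdsWithin 0 (Set.Ioi 0), 0 < t :=
    eventually_mem_nhdsWithin
  obtain ⟨t, hbd, ht1, ht0⟩ := (hev'.and (hlt1.and hmem)).exists
  -- the point z = x + t • u
  set z : E := x + t • u with hz
  have hz2 : z = (1 - t) • x + t • y := by
    rw [hz, hu]; module
  -- convexity bound
  have hconv : G z ≤ (1 - t) * G x + t * G y := by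
    rw [hz2]
    exact hG.2 (Set.mem_univ x) (Set.mem_univ y) (by linarith) (le_of_lt ht0) (by ring)
  -- local bound at z
  have hinner : ⟪w, z - x⟫_ℝ = t * ⟪w, u⟫_ℝ := by
    simp [hz, real_inner_smul_right]
  have hnorm : ‖z - x‖ = t * ‖u‖ := by
    simp [hz, norm_smul, abs_of_pos ht0]
  have hbd' : G x + t * ⟪w, u⟫_ℝ - G z ≤ δ / (2 * (‖u‖ + 1)) * (t * ‖u‖) := by
    have h1 : G x + ⟪w, z - x⟫_ℝ - G z ≤ max 0 (G x + ⟪w, z - x⟫_ℝ - G z) :=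
      le_max_right _ _
    have h2 : max 0 (G x + ⟪w, z - x⟫_ℝ - G z) ≤ δ / (2 * (‖u‖ + 1)) * ‖z - x‖ := by
      have := hbd
      rw [Real.norm_eq_abs, Real.norm_eq_abs] at this
      calc max 0 (G x + ⟪w, z - x⟫_ℝ - G z)
          ≤ |max 0 (G x + ⟪w, z - x⟫_ℝ - G z)| := le_abs_self _
        _ ≤ δ / (2 * (‖u‖ + 1)) * |‖z - x‖| := this
        _ = δ / (2 * (‖u‖ + 1)) * ‖z - x‖ := by rw [abs_of_nonneg (norm_nonneg _)]
    rw [hinner, hnorm] at *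
    linarith [h1.trans h2]
  -- combine: divide by t > 0
  have hkey : ⟪w, u⟫_ℝ - (G y - G x) ≤ δ / (2 * (‖u‖ + 1)) * ‖u‖ := by
    have : t * (⟪w, u⟫_ℝ - (G y - G x)) ≤ t * (δ / (2 * (‖u‖ + 1)) * ‖u‖) := by
      nlinarith [hbd', hconv]
    exact le_of_mul_le_mul_left (by linarith) ht0
  -- but δ / (2(‖u‖+1)) * ‖u‖ < δ, contradiction
  have hlt : δ / (2 * (‖u‖ + 1)) * ‖u‖ < δ := by
    rw [div_mul_eq_mul_div, div_lt_iff₀ (by positivity)]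
    nlinarith [norm_nonneg u, hδpos]
  have : δ ≤ δ / (2 * (‖u‖ + 1)) * ‖u‖ := by
    have : ⟪w, u⟫_ℝ - (G y - G x) = δ := by rw [hδ]; ring
    linarith [hkey, this.symm.le]
  linarith

/-- **Local subgradients of weakly convex functions are global weak subgradients.**
If `g : ℝ^d → ℝ` is `ρ`-weakly convex and `v` satisfies the local lower-approximation
property `g(y) ≥ g(x) + ⟨v, y - x⟩ + o(‖y - x‖)` as `y → x` (formally, the deficit
`y ↦ max{0, g(x) + ⟨v, y - x⟩ - g(y)}` is little-o of `‖y - x‖` at `x`), then the global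
inequality `g(y) ≥ g(x) + ⟨v, y - x⟩ - (ρ/2)‖y - x‖²` holds for all `y`. -/
theorem local_subgradient_is_global_weak_subgradient
    {d : ℕ} (hd : 1 ≤ d) (ρ : ℝ) (hρ : 0 < ρ)
    (g : EuclideanSpace ℝ (Fin d) → ℝ)
    -- `g` is `ρ`-weakly convex
    (hweak : ConvexOn ℝ Set.univ (fun x => g x + ρ / 2 * ‖x‖ ^ 2))
    (x v : EuclideanSpace ℝ (Fin d))
    -- local lower-approximation property, `o(‖y - x‖)` as `y → x`
    (hlocal : (fun y => max 0 (g x + ⟪v, y - x⟫_ℝ - g y))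
      =o[nhds x] (fun y => ‖y - x‖)) :
    ∀ y, g x + ⟪v, y - x⟫_ℝ - ρ / 2 * ‖y - x‖ ^ 2 ≤ g y := by
  set G : EuclideanSpace ℝ (Fin d) → ℝ := fun z => g z + ρ / 2 * ‖z‖ ^ 2 with hG
  set w : EuclideanSpace ℝ (Fin d) := v + ρ • x with hw
  -- key algebraic identity
  have hid : ∀ y, G x + ⟪w, y - x⟫_ℝ - G y
      = (g x + ⟪v, y - x⟫_ℝ - g y) - ρ / 2 * ‖y - x‖ ^ 2 := by
    intro y
    have hns : ‖y - x‖ ^ 2 = ‖y‖ ^ 2 - 2 * ⟪y, x⟫_ℝ + ‖x‖ ^ 2 := by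
      have := @norm_sub_sq_real (EuclideanSpace ℝ (Fin d)) _ _ y x
      linarith
    have hxi : ⟪x, y - x⟫_ℝ = ⟪y, x⟫_ℝ - ‖x‖ ^ 2 := by
      rw [inner_sub_right, real_inner_comm x y, real_inner_self_eq_norm_sq]
    have hwi : ⟪w, y - x⟫_ℝ = ⟪v, y - x⟫_ℝ + ρ * ⟪x, y - x⟫_ℝ := by
      rw [hw, inner_add_left, real_inner_smul_left]
    rw [hG, hwi, hxi, hns]; ring
  -- the transferred little-o hypothesis
  have hlocal' : (fun y => max 0 (G x + ⟪w, y - x⟫_ℝ - G y))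
      =o[nhds x] (fun y => ‖y - x‖) := by
    refine (Asymptotics.isBigO_of_le _ fun y => ?_).trans_isLittleO hlocal
    rw [Real.norm_eq_abs, Real.norm_eq_abs, abs_of_nonneg (le_max_left _ _),
      abs_of_nonneg (le_max_left _ _)]
    apply max_le (le_max_left _ _)
    refine le_trans ?_ (le_max_right _ _)
    rw [hid y]
    nlinarith [sq_nonneg ‖y - x‖, hρ.le]
  intro y
  have := convex_local_subgradient_global G hweak x w hlocal' y
  have h3 : g x + ⟪v, y - x⟫_ℝ - g y - ρ / 2 * ‖y - x‖ ^ 2 ≤ 0 := by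
    rw [← hid y]; linarith
  linarith [h3]
end
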